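/- arXiv:2402.12116 — 7 statements merged into one kernel-verified Lean document; each statement's English description precedes it below -/
import Mathlib

section
/- If f is a discrete Morse function on a finite simplicial complex X and α is a k-simplex, then the set of (k+1)-cofaces β of α with f(β) ≤ f(α) and the set of (k−1)-faces ν of α with f(ν) ≥ f(α) cannot both be nonempty. -/
open Finset
open scoped Classical

universe u

/-- A finite abstract simplicial complex on vertex type `V`. -/
structure SComplex (V : Type u) [DecidableEq V] where
  faces : Finset (Finset V)
  nonempty_of_mem : ∀ s ∈ faces, s.Nonempty
  down_closed : ∀ s ∈ faces, ∀ t, t ⊆ s → t.Nonempty → t ∈ faces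

variable {V : Type u} [DecidableEq V]

/-- `σ` is a codimension-1 face of `τ`. -/
def Face1 (σ τ : Finset V) : Prop := σ ⊆ τ ∧ σ.card + 1 = τ.card

/-- `f` is a discrete Morse function on the collection of simplices `S`. -/
def IsDMFOn (S : Set (Finset V)) (f : Finset V → ℝ) : Prop :=
  ∀ α ∈ S, {β | β ∈ S ∧ Face1 α β ∧ f β ≤ f α}.Subsingleton ∧
           {ν | ν ∈ S ∧ Face1 ν α ∧ f α ≤ f ν}.Subsingleton

/-- `σ` is a critical cell of the discrete Morse function `f` on `S`. -/
def IsCriticalIn (S : Set (Finset V)) (f : Finset V → ℝ) (σ : Finset V) : Prop :=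
  σ ∈ S ∧ (¬ ∃ β ∈ S, Face1 σ β ∧ f β ≤ f σ) ∧ (¬ ∃ ν ∈ S, Face1 ν σ ∧ f σ ≤ f ν)

/-- The discrete vector field associated to a discrete Morse function. -/
def gradSet (S : Set (Finset V)) (f : Finset V → ℝ) : Set (Finset V × Finset V) :=
  {p | p.1 ∈ S ∧ p.2 ∈ S ∧ Face1 p.1 p.2 ∧ f p.2 ≤ f p.1}

/-- `W` is a discrete vector field on the collection of simplices `S`:
pairs `(α, β)` with `α` a codimension-1 face of `β`, each simplex in at most one pair. -/
def IsVFOn (S : Set (Finset V)) (W : Set (Finset V × Finset V)) : Prop :=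
  (∀ p ∈ W, p.1 ∈ S ∧ p.2 ∈ S ∧ Face1 p.1 p.2) ∧
  (∀ p ∈ W, ∀ q ∈ W, p ≠ q → p.1 ≠ q.1 ∧ p.1 ≠ q.2 ∧ p.2 ≠ q.1 ∧ p.2 ≠ q.2)

/-- One step of a `V`-path: from the pair `(α, β)` one may pass to the pair `(α', β')`
provided `α'` is a codimension-1 face of `β` different from `α`. -/
def VStep (p q : Finset V × Finset V) : Prop := Face1 q.1 p.2 ∧ q.1 ≠ p.1

/-- A `V`-path, recorded as its list of matched pairs `(αᵢ, βᵢ)`. -/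
def IsVPath (W : Set (Finset V × Finset V)) (l : List (Finset V × Finset V)) : Prop :=
  (∀ p ∈ l, p ∈ W) ∧ l.Chain' VStep

/-- `W` admits a nontrivial closed `V`-path. -/
def HasClosedVPath (W : Set (Finset V × Finset V)) : Prop :=
  ∃ p l, IsVPath W (p :: l) ∧ VStep ((p :: l).getLast (List.cons_ne_nil p l)) p

/-- A discrete gradient: a discrete vector field with no nontrivial closed paths. -/
def IsGradientOn (S : Set (Finset V)) (W : Set (Finset V × Finset V)) : Prop :=
  IsVFOn S W ∧ ¬ HasClosedVPath W

/-- The critical cells of the vector field `W` among the simplices of `S`. -/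
def critOf (W : Set (Finset V × Finset V)) (S : Set (Finset V)) : Set (Finset V) :=
  {s | s ∈ S ∧ ∀ p ∈ W, p.1 ≠ s ∧ p.2 ≠ s}

/-- The chains (nonempty totally ordered collections) of simplices from `K`;
these are the simplices of the order complex `S_K`. -/
def chainsOf (K : Set (Finset V)) : Set (Finset (Finset V)) :=
  {C | C.Nonempty ∧ ↑C ⊆ K ∧ IsChain (· ⊆ ·) (C : Set (Finset V))}

/-- The open simplicial complex `K = X \ T`. -/
def Kset (X T : SComplex V) : Set (Finset V) :=
  (↑X.faces : Set (Finset V)) \ ↑T.faces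

/-- The level "subcomplex" determined by the value `a`:
all simplices contained in some simplex of `f`-value at most `a`. -/
def sublevel (S : Set (Finset V)) (f : Finset V → ℝ) (a : ℝ) : Set (Finset V) :=
  {τ | τ.Nonempty ∧ ∃ σ ∈ S, f σ ≤ a ∧ τ ⊆ σ}

/-- The geometric realization of a collection of (open) simplices on vertex set `V`,
as the set of convex weights whose support is a member of the collection. -/
noncomputable def realize [Fintype V] (L : Set (Finset V)) : Set (V → ℝ) :=
  {w | (∀ v, 0 ≤ w v) ∧ (∑ v, w v = 1) ∧ (Finset.univ.filter fun v => w v ≠ 0) ∈ L}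

/-- `A` is a strong deformation retract of `Y`. -/
def IsStrongDefRetract {Z : Type*} [TopologicalSpace Z] (Y A : Set Z) : Prop :=
  A ⊆ Y ∧ ∃ H : C(↥Y × ↥unitInterval, ↥Y),
    (∀ y, H (y, 0) = y) ∧ (∀ y, ((H (y, 1) : ↥Y) : Z) ∈ A) ∧
    ∀ y : ↥Y, (y : Z) ∈ A → ∀ t, H (y, t) = y

/-- An elementary collapse: remove a free pair `(σ, τ)`. -/
def ElemCollapse (Y Y' : Set (Finset V)) : Prop :=
  ∃ σ τ, σ ∈ Y ∧ τ ∈ Y ∧ Face1 σ τ ∧ (∀ ρ ∈ Y, σ ⊂ ρ → ρ = τ) ∧ Y' = Y \ {σ, τ}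

section Morse

variable [LinearOrder V] [Fintype V]

/-- The simplicial incidence sign of a codimension-1 face `σ` of `τ`. -/
noncomputable def incSign (σ τ : Finset V) : ℤ :=
  if Face1 σ τ then (-1 : ℤ) ^ (∑ v ∈ τ \ σ, (τ.filter fun x => x < v).card) else 0

/-- The first cell of a path, or `σ` if the path is empty. -/
def nextCell (σ : Finset V) : List (Finset V × Finset V) → Finset V
  | [] => σ
  | q :: _ => q.1

/-- The sign (Forman index factor) of a gradient path ending at `σ`. -/
noncomputable def pathSign (σ : Finset V) : List (Finset V × Finset V) → ℤ
  | [] => 1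
  | (a, b) :: rest => (-(incSign a b) * incSign (nextCell σ rest) b) * pathSign σ rest

/-- The gradient paths from (the boundary of) a critical cell `τ` to a critical cell `σ`. -/
def gradPaths (W : Set (Finset V × Finset V)) (τ σ : Finset V) :
    Set (List (Finset V × Finset V)) :=
  {l | IsVPath W l ∧ (∀ q ∈ l.head?, Face1 q.1 τ) ∧ (l = [] → Face1 σ τ) ∧
       (∀ q ∈ l.getLast?, Face1 σ q.2 ∧ σ ≠ q.1)}

/-- The coefficient of `σ` in the Morse boundary of `τ`:
the signed count of gradient paths from `τ` to `σ`. -/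
noncomputable def morseCoeff (W : Set (Finset V × Finset V)) (τ σ : Finset V) : ℤ :=
  ∑ᶠ l ∈ gradPaths W τ σ, incSign (nextCell σ l) τ * pathSign σ l

/-- The cells of `S` with `i` vertices (i.e. of dimension `i - 1`). -/
def cellsD (S : Set (Finset V)) (i : ℕ) : Type u := {s : Finset V // s ∈ S ∧ s.card = i}

noncomputable instance (S : Set (Finset V)) (i : ℕ) : Fintype (cellsD S i) := by
  unfold cellsD; infer_instance

/-- The Morse boundary operator from (geometric) degree `i` to degree `i - 1`,
on chains generated by the cells of `S`. -/
noncomputable def morseBd (W : Set (Finset V × Finset V)) (S : Set (Finset V)) (i : ℕ) :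
    (cellsD S (i + 1) → ℤ) →ₗ[ℤ] (cellsD S i → ℤ) :=
  Matrix.mulVecLin (Matrix.of fun (σ : cellsD S i) (τ : cellsD S (i + 1)) =>
    morseCoeff W τ.1 σ.1)

/-- The simplicial boundary operator on chains generated by the cells of `S`
(faces outside `S` are dropped; for `S = X \ T` this is the relative chain complex). -/
noncomputable def simpBd (S : Set (Finset V)) (i : ℕ) :
    (cellsD S (i + 1) → ℤ) →ₗ[ℤ] (cellsD S i → ℤ) :=
  Matrix.mulVecLin (Matrix.of fun (σ : cellsD S i) (τ : cellsD S (i + 1)) =>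
    incSign σ.1 τ.1)

end Morse

/-- Homology at a spot of a (would-be) chain complex: the kernel of `d1`
modulo (the pullback of) the image of `d2`. -/
abbrev Hgy {R A B C : Type*} [Ring R] [AddCommGroup A] [AddCommGroup B] [AddCommGroup C]
    [Module R A] [Module R B] [Module R C] (d1 : B →ₗ[R] A) (d2 : C →ₗ[R] B) : Type _ :=
  LinearMap.ker d1 ⧸ Submodule.comap (LinearMap.ker d1).subtype (LinearMap.range d2)

/-- The homology in geometric degree `i` of the Morse complex of the gradient `W`
with cells drawn from `S` (typically `S` = critical cells of `W`). -/
noncomputable abbrev MorseHomology [LinearOrder V] [Fintype V]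
    (W : Set (Finset V × Finset V)) (S : Set (Finset V)) (i : ℕ) : Type u :=
  Hgy (morseBd W S i) (morseBd W S (i + 1))

/-- The relative simplicial homology `H_i(X, T)` in geometric degree `i`, presented as the
homology of the chain complex generated by the cells of `K = X \ T`; for an open simplicial
complex `K` this is the Borel–Moore homology `H_i^{BM}(K)`. -/
noncomputable abbrev BMHomology [LinearOrder V] [Fintype V] (K : Set (Finset V)) (i : ℕ) :
    Type u :=
  Hgy (simpBd K i) (simpBd K (i + 1))

/-- A cell of the order complex is critical for the induced gradient `W` (the restriction of
the gradient `V'` on `sd X` to `S`) if it is `V'`-critical or its `V'`-partner lies outside `S`. -/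
def WCritOf (S : Set (Finset V)) (V' : Set (Finset V × Finset V)) (C : Finset V) : Prop :=
  C ∈ S ∧ ((∀ p ∈ V', p.1 ≠ C ∧ p.2 ≠ C) ∨
           (∃ p ∈ V', (p.1 = C ∧ p.2 ∉ S) ∨ (p.2 = C ∧ p.1 ∉ S)))

/-- `σ` has height `i` in `K`: the longest chain of simplices of `K` ending at `σ`
has `i + 1` elements. -/
def HasHeight (K : Set (Finset V)) (σ : Finset V) (i : ℕ) : Prop :=
  IsGreatest {n | ∃ l : List (Finset V), l.length = n ∧ l.Chain' (· ⊂ ·) ∧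
    (∀ s ∈ l, s ∈ K) ∧ l.getLast? = some σ} (i + 1)

/-- For a discrete Morse function on a finite simplicial complex, the two
exceptional sets at a simplex `α` cannot both be nonempty (Forman, Lemma 2.5). -/
theorem stmt_0 {V : Type u} [DecidableEq V] (X : SComplex V) (f : Finset V → ℝ)
    (hf : IsDMFOn (↑X.faces : Set (Finset V)) f) (α : Finset V) (hα : α ∈ X.faces) :
    ¬ ({β | β ∈ X.faces ∧ Face1 α β ∧ f β ≤ f α}.Nonempty ∧
       {ν | ν ∈ X.faces ∧ Face1 ν α ∧ f α ≤ f ν}.Nonempty) := by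
  rintro ⟨⟨β, hβX, hαβ, hfβ⟩, ⟨ν, hνX, hνα, hfν⟩⟩
  -- construct the other cell α' with ν ⊂ α' ⊂ β
  have hνsubβ : ν ⊆ β := hνα.1.trans hαβ.1
  have hcardβ : (β \ α).card = 1 := by
    rw [Finset.card_sdiff_of_subset hαβ.1]; have := hαβ.2; omega
  obtain ⟨y, hy⟩ := Finset.card_eq_one.mp hcardβ
  have hyβ : y ∈ β ∧ y ∉ α := by
    have := Finset.mem_sdiff.mp (hy ▸ Finset.mem_singleton_self y)
    exact this
  set α' : Finset V := insert y ν with hα'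
  have hyν : y ∉ ν := fun h => hyβ.2 (hνα.1 h)
  have hcardα' : α'.card = ν.card + 1 := Finset.card_insert_of_notMem hyν
  have hα'subβ : α' ⊆ β := Finset.insert_subset hyβ.1 hνsubβ
  have hα'X : α' ∈ X.faces :=
    X.down_closed β hβX α' hα'subβ ⟨y, Finset.mem_insert_self y ν⟩
  have hα'ne : α' ≠ α := fun h => hyβ.2 (h ▸ Finset.mem_insert_self y ν)
  have hF1 : Face1 ν α' := ⟨Finset.subset_insert y ν, hcardα'.symm⟩
  have hF2 : Face1 α' β := ⟨hα'subβ, by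
    have h1 := hνα.2; have h2 := hαβ.2; omega⟩
  by_cases hc : f β ≤ f α'
  · -- α and α' are both faces of β with f β ≤ f, contradiction with hf at β
    have hs := (hf β (by exact_mod_cast hβX)).2
    have h1 : α ∈ {ν' | ν' ∈ (↑X.faces : Set (Finset V)) ∧ Face1 ν' β ∧ f β ≤ f ν'} :=
      ⟨by exact_mod_cast hα, hαβ, hfβ⟩
    have h2 : α' ∈ {ν' | ν' ∈ (↑X.faces : Set (Finset V)) ∧ Face1 ν' β ∧ f β ≤ f ν'} :=
      ⟨by exact_mod_cast hα'X, hF2, hc⟩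
    exact hα'ne (hs h2 h1)
  · -- f α' < f β ≤ f α ≤ f ν, so α and α' are both cofaces of ν with f ≤ f ν
    have hs := (hf ν (by exact_mod_cast hνX)).1
    have h1 : α ∈ {β' | β' ∈ (↑X.faces : Set (Finset V)) ∧ Face1 ν β' ∧ f β' ≤ f ν} :=
      ⟨by exact_mod_cast hα, hνα, hfν⟩
    have h2 : α' ∈ {β' | β' ∈ (↑X.faces : Set (Finset V)) ∧ Face1 ν β' ∧ f β' ≤ f ν} :=
      ⟨by exact_mod_cast hα'X, hF1, le_trans (le_of_lt (lt_of_not_ge hc)) (hfβ.trans hfν)⟩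
    exact hα'ne (hs h2 h1)
end

section
/- The discrete vector field V_f associated to a discrete Morse function f on a finite simplicial complex X has no nontrivial closed V-paths; that is, V_f is a discrete gradient. -/
open Finset
open scoped Classical

universe u

variable {V : Type u} [DecidableEq V]

/-- Forman's lemma: no cell is both up-paired and down-paired. -/
lemma noBoth {V : Type u} [DecidableEq V] (X : SComplex V) (f : Finset V → ℝ)
    (hf : IsDMFOn (↑X.faces : Set (Finset V)) f) {ν σ τ : Finset V}
    (hν : ν ∈ X.faces) (hσ : σ ∈ X.faces) (hτ : τ ∈ X.faces)
    (h1 : Face1 ν σ) (h2 : Face1 σ τ) (hfσ : f σ ≤ f ν) (hfτ : f τ ≤ f σ) : False := by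
  obtain ⟨hsub1, hc1⟩ := h1
  obtain ⟨hsub2, hc2⟩ := h2
  have hcard : (τ \ σ).card = 1 := by
    rw [Finset.card_sdiff_of_subset hsub2]; omega
  obtain ⟨v, hv⟩ := Finset.card_eq_one.mp hcard
  have hvτ : v ∈ τ := by
    have : v ∈ τ \ σ := hv ▸ Finset.mem_singleton_self v
    exact (Finset.mem_sdiff.mp this).1
  have hvσ : v ∉ σ := by
    have : v ∈ τ \ σ := hv ▸ Finset.mem_singleton_self v
    exact (Finset.mem_sdiff.mp this).2
  have hvν : v ∉ ν := fun h => hvσ (hsub1 h)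
  set σ' : Finset V := insert v ν with hσ'
  have hσ'card : σ'.card = σ.card := by
    rw [hσ', Finset.card_insert_of_notMem hvν]; omega
  have hσ'sub : σ' ⊆ τ := by
    intro x hx
    rcases Finset.mem_insert.mp hx with h | h
    · exact h ▸ hvτ
    · exact hsub2 (hsub1 h)
  have hσ'ne : σ' ≠ σ := fun h => hvσ (h ▸ Finset.mem_insert_self v ν)
  have hσ'X : σ' ∈ X.faces :=
    X.down_closed τ hτ σ' hσ'sub ⟨v, Finset.mem_insert_self v ν⟩
  have hF1 : Face1 ν σ' := ⟨Finset.subset_insert v ν, by omega⟩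
  have hF2 : Face1 σ' τ := ⟨hσ'sub, by omega⟩
  rcases le_or_gt (f σ') (f ν) with h | h
  · -- both σ and σ' are up-pairs of ν
    have := (hf ν hν).1
    have h1' : σ ∈ {β | β ∈ (↑X.faces : Set (Finset V)) ∧ Face1 ν β ∧ f β ≤ f ν} :=
      ⟨hσ, ⟨hsub1, hc1⟩, hfσ⟩
    have h2' : σ' ∈ {β | β ∈ (↑X.faces : Set (Finset V)) ∧ Face1 ν β ∧ f β ≤ f ν} :=
      ⟨hσ'X, hF1, h⟩
    exact hσ'ne (this h2' h1')
  · -- both σ and σ' are down-pairs of τ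
    have hτσ' : f τ ≤ f σ' := le_trans (le_trans hfτ hfσ) h.le
    have := (hf τ hτ).2
    have h1' : σ ∈ {μ | μ ∈ (↑X.faces : Set (Finset V)) ∧ Face1 μ τ ∧ f τ ≤ f μ} :=
      ⟨hσ, ⟨hsub2, hc2⟩, hfτ⟩
    have h2' : σ' ∈ {μ | μ ∈ (↑X.faces : Set (Finset V)) ∧ Face1 μ τ ∧ f τ ≤ f μ} :=
      ⟨hσ'X, hF2, hτσ'⟩
    exact hσ'ne (this h2' h1')

/-- Along a `V`-step between matched pairs, `f` of the top cell strictly decreases. -/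
lemma stepLt {V : Type u} [DecidableEq V] (X : SComplex V) (f : Finset V → ℝ)
    (hf : IsDMFOn (↑X.faces : Set (Finset V)) f) {q r : Finset V × Finset V}
    (hq : q ∈ gradSet (↑X.faces : Set (Finset V)) f)
    (hr : r ∈ gradSet (↑X.faces : Set (Finset V)) f) (hs : VStep q r) : f r.2 < f q.2 := by
  obtain ⟨hq1, hq2, hqF, hqf⟩ := hq
  obtain ⟨hr1, hr2, hrF, hrf⟩ := hr
  obtain ⟨hsF, hsne⟩ := hs
  have hlt : f r.1 < f q.2 := by
    by_contra h
    push_neg at h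
    have hsub := (hf q.2 hq2).2
    have h1' : q.1 ∈ {μ | μ ∈ (↑X.faces : Set (Finset V)) ∧ Face1 μ q.2 ∧ f q.2 ≤ f μ} :=
      ⟨hq1, hqF, hqf⟩
    have h2' : r.1 ∈ {μ | μ ∈ (↑X.faces : Set (Finset V)) ∧ Face1 μ q.2 ∧ f q.2 ≤ f μ} :=
      ⟨hr1, hsF, h⟩
    exact hsne (hsub h2' h1')
  exact lt_of_le_of_lt hrf hlt

/-- Along a `V`-path, `f` of the top cell of the last pair is at most that of the first. -/
lemma lastLe {V : Type u} [DecidableEq V] (X : SComplex V) (f : Finset V → ℝ)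
    (hf : IsDMFOn (↑X.faces : Set (Finset V)) f) :
    ∀ (l : List (Finset V × Finset V)) (p : Finset V × Finset V),
      (∀ x ∈ p :: l, x ∈ gradSet (↑X.faces : Set (Finset V)) f) →
      (p :: l).Chain' VStep →
      f (((p :: l).getLast (List.cons_ne_nil p l)).2) ≤ f p.2 := by
  intro l
  induction l with
  | nil => intro p _ _; simp
  | cons q t ih =>
    intro p hmem hch
    rw [List.getLast_cons (List.cons_ne_nil q t)]
    have hch' := List.isChain_cons_cons.mp hch
    have h1 : f (((q :: t).getLast (List.cons_ne_nil q t)).2) ≤ f q.2 :=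
      ih q (fun x hx => hmem x (List.mem_cons_of_mem p hx)) hch'.2
    have h2 : f q.2 < f p.2 :=
      stepLt X f hf (hmem p List.mem_cons_self)
        (hmem q (List.mem_cons_of_mem p List.mem_cons_self)) hch'.1
    exact h1.trans h2.le

/-- The vector field associated to a discrete Morse function has no
nontrivial closed `V`-paths; that is, it is a discrete gradient. -/
theorem stmt_2 {V : Type u} [DecidableEq V] (X : SComplex V) (f : Finset V → ℝ)
    (hf : IsDMFOn (↑X.faces : Set (Finset V)) f) :
    IsGradientOn (↑X.faces : Set (Finset V)) (gradSet (↑X.faces : Set (Finset V)) f) := by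
  constructor
  · constructor
    · rintro p ⟨h1, h2, h3, -⟩; exact ⟨h1, h2, h3⟩
    · rintro p hp q hq hne
      obtain ⟨hp1, hp2, hpF, hpf⟩ := hp
      obtain ⟨hq1, hq2, hqF, hqf⟩ := hq
      refine ⟨?_, ?_, ?_, ?_⟩
      · intro h
        apply hne
        have h2 : p.2 = q.2 := by
          have hsub := (hf p.1 hp1).1
          have hA : p.2 ∈ {β | β ∈ (↑X.faces : Set (Finset V)) ∧ Face1 p.1 β ∧ f β ≤ f p.1} :=
            ⟨hp2, hpF, hpf⟩
          have hB : q.2 ∈ {β | β ∈ (↑X.faces : Set (Finset V)) ∧ Face1 p.1 β ∧ f β ≤ f p.1} :=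
            ⟨hq2, h ▸ hqF, h ▸ hqf⟩
          exact hsub hA hB
        exact Prod.ext h h2
      · intro h
        exact noBoth X f hf hq1 hq2 hp2 hqF (h ▸ hpF) hqf (h ▸ hpf)
      · intro h
        exact noBoth X f hf hp1 hp2 hq2 hpF (h ▸ hqF) hpf (h ▸ hqf)
      · intro h
        apply hne
        have h1 : p.1 = q.1 := by
          have hsub := (hf p.2 hp2).2
          have hA : p.1 ∈ {μ | μ ∈ (↑X.faces : Set (Finset V)) ∧ Face1 μ p.2 ∧ f p.2 ≤ f μ} :=
            ⟨hp1, hpF, hpf⟩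
          have hB : q.1 ∈ {μ | μ ∈ (↑X.faces : Set (Finset V)) ∧ Face1 μ p.2 ∧ f p.2 ≤ f μ} :=
            ⟨hq1, h ▸ hqF, by rw [h]; exact hqf⟩
          exact hsub hA hB
        exact Prod.ext h1 h
  · rintro ⟨p, l, ⟨hmem, hch⟩, hclose⟩
    have hlastmem : (p :: l).getLast (List.cons_ne_nil p l) ∈
        gradSet (↑X.faces : Set (Finset V)) f :=
      hmem _ (List.getLast_mem _)
    have h1 : f p.2 < f (((p :: l).getLast (List.cons_ne_nil p l)).2) :=
      stepLt X f hf hlastmem (hmem p List.mem_cons_self) hclose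
    have h2 : f (((p :: l).getLast (List.cons_ne_nil p l)).2) ≤ f p.2 :=
      lastLe X f hf l p hmem hch
    linarith
end

section
/- Let V be a discrete gradient on a finite simplicial complex X, and let H_V be the Hasse diagram of X with the edges corresponding to pairs in V reversed. Then H_V is an acyclic directed graph. -/
open Finset
open scoped Classical

universe u

variable {V : Type u} [DecidableEq V]

/-- The modified Hasse diagram: the edge `β → α` for each codimension-1 face-pair not in
`W`, reversed to `α → β` for each pair `(α, β) ∈ W`. -/
def hasseRel {V : Type u} [DecidableEq V] (S : Set (Finset V))
    (W : Set (Finset V × Finset V)) (a b : Finset V) : Prop :=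
  a ∈ S ∧ b ∈ S ∧ ((Face1 b a ∧ (b, a) ∉ W) ∨ (a, b) ∈ W)


section AuxStmt5

variable {V : Type u} [DecidableEq V] {S : Set (Finset V)} {W : Set (Finset V × Finset V)}

/-- Two consecutive up-edges are impossible in a discrete vector field. -/
private lemma aux_no_up_up (hVF : IsVFOn S W) {a b c : Finset V}
    (h1 : (a, b) ∈ W) (h2 : (b, c) ∈ W) : False := by
  have hab : Face1 a b := (hVF.1 _ h1).2.2
  have hne : ((a, b) : Finset V × Finset V) ≠ (b, c) := by
    intro h
    have h1' : a = b := congrArg Prod.fst h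
    have h2' : a.card + 1 = b.card := hab.2
    rw [h1'] at h2'
    omega
  exact (hVF.2 _ h1 _ h2 hne).2.2.1 rfl

/-- Every edge of the modified Hasse diagram is either an up-edge (a matched pair)
or a down-edge. -/
private lemma aux_step (hVF : IsVFOn S W) {a b : Finset V} (h : hasseRel S W a b) :
    ((a, b) ∈ W ∧ b.card = a.card + 1) ∨
      (Face1 b a ∧ (b, a) ∉ W ∧ (a, b) ∉ W ∧ b.card + 1 = a.card) := by
  rcases h.2.2 with ⟨hf, hnW⟩ | hw
  · right
    refine ⟨hf, hnW, ?_, hf.2⟩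
    intro hw
    have h2 : a.card + 1 = b.card := ((hVF.1 _ hw).2.2).2
    have h3 : b.card + 1 = a.card := hf.2
    omega
  · left
    exact ⟨hw, by have h2 : a.card + 1 = b.card := ((hVF.1 _ hw).2.2).2; omega⟩

/-- Along a walk in the modified Hasse diagram starting at a cell of at most `c + 1`
vertices (where if exactly `c + 1` the incoming edge was an up-edge), every cell has at
most `c + 1` vertices. -/
private lemma aux_bound (hVF : IsVFOn S W) (c : ℕ) :
    ∀ (l : List (Finset V)) (a : Finset V), List.Chain (hasseRel S W) a l →
      a.card ≤ c + 1 → (a.card = c + 1 → ∃ x, (x, a) ∈ W) →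
      ∀ b ∈ l, b.card ≤ c + 1
  | [], _, _, _, _ => by simp
  | x :: l, a, hch, ha, hinv => by
    rw [List.Chain, List.chain_cons] at hch
    obtain ⟨hax, hch⟩ := hch
    rcases aux_step hVF hax with ⟨hw, hcard⟩ | ⟨_, _, _, hcard⟩
    · have hne : a.card ≠ c + 1 := fun h => aux_no_up_up hVF (hinv h).choose_spec hw
      have hx : x.card ≤ c + 1 := by omega
      intro b hb
      rcases List.mem_cons.mp hb with rfl | hb
      · exact hx
      · exact aux_bound hVF c l x hch hx (fun _ => ⟨a, hw⟩) b hb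
    · intro b hb
      rcases List.mem_cons.mp hb with rfl | hb
      · omega
      · exact aux_bound hVF c l x hch (by omega) (fun h => absurd h (by omega)) b hb

/-- From an alternating walk (forced by the cardinality bounds) in the modified Hasse
diagram, starting with the up-edge `(a, b)` and ending at `v0`, build a `V`-path whose
last pair "closes up" onto `v0`. -/
private lemma aux_build (hVF : IsVFOn S W) (c : ℕ) (v0 : Finset V) (hv0 : v0.card = c) :
    ∀ (n : ℕ) (l : List (Finset V)) (a b : Finset V), l.length ≤ n →
      (a, b) ∈ W → b.card = c + 1 → List.Chain (hasseRel S W) b l →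
      (∀ x ∈ l, c ≤ x.card) → (∀ x ∈ l, x.card ≤ c + 1) →
      l.getLast? = some v0 →
      ∃ L : List (Finset V × Finset V),
        IsVPath W ((a, b) :: L) ∧
        Face1 v0 (((a, b) :: L).getLast (List.cons_ne_nil _ _)).2 ∧
        v0 ≠ (((a, b) :: L).getLast (List.cons_ne_nil _ _)).1 := by
  intro n
  induction n with
  | zero =>
      intro l a b hlen _ _ _ _ _ hlast
      have : l = [] := List.length_eq_zero_iff.mp (Nat.le_zero.mp hlen)
      subst this
      simp at hlast
  | succ n ih =>
      intro l a b hlen hab hb hch hlo hhi hlast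
      match l with
      | [] => simp at hlast
      | x :: rest =>
        rw [List.Chain, List.chain_cons] at hch
        obtain ⟨hbx, hch⟩ := hch
        rcases aux_step hVF hbx with ⟨hw, _⟩ | ⟨hf, hnW, _, hcard⟩
        · exact (aux_no_up_up hVF hab hw).elim
        · -- down-edge b → x
          match rest with
          | [] =>
            have hx : x = v0 := by simpa using hlast
            refine ⟨[], ⟨?_, ?_⟩, ?_, ?_⟩
            · intro p hp
              rw [List.mem_singleton] at hp
              subst hp; exact hab
            · exact List.isChain_singleton _
            · simp only [List.getLast_singleton]
              rw [← hx]
              exact hf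
            · simp only [List.getLast_singleton]
              intro h
              apply hnW
              rw [show x = a from hx.trans h]
              exact hab
          | y :: rest' =>
            rw [List.chain_cons] at hch
            obtain ⟨hxy, hch⟩ := hch
            have hxcard : x.card = c := by omega
            rcases aux_step hVF hxy with ⟨hw2, hcy⟩ | ⟨_, _, _, hcy⟩
            · -- up-edge x → y
              have hycard : y.card = c + 1 := by omega
              match rest' with
              | [] =>
                have : y = v0 := by simpa using hlast
                subst this
                omega
              | z :: rest'' =>
                rw [List.getLast?_cons_cons, List.getLast?_cons_cons] at hlast
                have hlen' : (z :: rest'').length ≤ n := by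
                  simp only [List.length_cons] at hlen ⊢; omega
                obtain ⟨L, hpath, hcl1, hcl2⟩ := ih (z :: rest'') x y hlen' hw2 hycard hch
                  (fun u hu => hlo u (by simp [hu]))
                  (fun u hu => hhi u (by simp [hu])) hlast
                refine ⟨(x, y) :: L, ⟨?_, ?_⟩, ?_, ?_⟩
                · intro p hp
                  rcases List.mem_cons.mp hp with rfl | hp
                  · exact hab
                  · exact hpath.1 p hp
                · refine List.isChain_cons_cons.mpr ⟨⟨hf, ?_⟩, hpath.2⟩
                  intro h
                  apply hnW
                  rw [show x = a from h]
                  exact hab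
                · rwa [List.getLast_cons_cons]
                · rwa [List.getLast_cons_cons]
            · -- down-edge x → y: impossible, would drop below the minimum
              have := hlo y (by simp)
              omega

end AuxStmt5

/-- The Hasse diagram of a finite simplicial complex with the edges of a
discrete gradient reversed is an acyclic directed graph. -/
theorem stmt_5 {V : Type u} [DecidableEq V] (X : SComplex V)
    (W : Set (Finset V × Finset V)) (hW : IsGradientOn (↑X.faces : Set (Finset V)) W) :
    ∀ s, ¬ Relation.TransGen (hasseRel (↑X.faces : Set (Finset V)) W) s s := by
  intro s hs
  classical
  set R := hasseRel (↑X.faces : Set (Finset V)) W with hRdef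
  have hVF := hW.1
  -- extracting a nonempty chain from a `TransGen` cycle
  have gl : ∀ (a : Finset V) (l : List (Finset V)) (x : Finset V),
      (a :: l).getLast? = some x → (a :: l).getLast (List.cons_ne_nil a l) = x := by
    intro a l x h
    rw [List.getLast?_eq_getLast_of_ne_nil (List.cons_ne_nil a l)] at h
    exact Option.some.inj h
  have cyc_list : ∀ v : Finset V, Relation.TransGen R v v →
      ∃ l : List (Finset V), l ≠ [] ∧ List.Chain R v l ∧
        (v :: l).getLast? = some v := by
    intro v hv
    obtain ⟨w, hvw, hwv⟩ := Relation.TransGen.head'_iff.mp hv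
    obtain ⟨l, hl1, hl2⟩ := List.exists_isChain_cons_of_relationReflTransGen hwv
    refine ⟨w :: l, List.cons_ne_nil _ _, List.chain_cons.mpr ⟨hvw, hl1⟩, ?_⟩
    rw [List.getLast?_cons_cons, List.getLast?_eq_getLast_of_ne_nil (List.cons_ne_nil _ _), hl2]
  -- every vertex on a cycle lies in `X.faces`
  have key : ∀ v : Finset V, Relation.TransGen R v v → v ∈ X.faces := by
    intro v hv
    obtain ⟨l, hne, hch, _⟩ := cyc_list v hv
    match l with
    | [] => exact absurd rfl hne
    | b :: t => exact (List.chain_cons.mp hch).1.1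
  -- pick a cycle vertex of minimal cardinality
  obtain ⟨v0, hv0mem, hv0min⟩ := Finset.exists_min_image
    (X.faces.filter fun v => Relation.TransGen R v v) Finset.card
    ⟨s, Finset.mem_filter.2 ⟨key s hs, hs⟩⟩
  rw [Finset.mem_filter] at hv0mem
  obtain ⟨hv0S, hv0cyc⟩ := hv0mem
  obtain ⟨l, hne, hch, hlast⟩ := cyc_list v0 hv0cyc
  -- every vertex of this cycle is itself on a cycle
  have hcycmem : ∀ x ∈ l, Relation.TransGen R x x := by
    intro x hx
    obtain ⟨l₁, l₂, rfl⟩ := List.append_of_mem hx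
    rw [List.Chain, List.isChain_cons_split] at hch
    obtain ⟨h1, h2⟩ := hch
    have hva : Relation.ReflTransGen R v0 x := by
      refine List.relationReflTransGen_of_exists_isChain_cons _ h1 (gl _ _ _ ?_)
      rw [← List.cons_append]
      exact List.getLast?_concat
    have hxa : Relation.ReflTransGen R x v0 := by
      refine List.relationReflTransGen_of_exists_isChain_cons l₂ h2 (gl _ _ _ ?_)
      rw [← List.cons_append, List.getLast?_append_cons] at hlast
      exact hlast
    rcases Relation.reflTransGen_iff_eq_or_transGen.mp hxa with rfl | ht
    · exact hv0cyc
    · exact ht.trans_left hva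
  -- each vertex of the cycle is a face
  have hSmem : ∀ x ∈ l, x ∈ X.faces := fun x hx => key x (hcycmem x hx)
  -- lower bound: minimality
  have hmin : ∀ x ∈ l, v0.card ≤ x.card := by
    intro x hx
    exact hv0min x (Finset.mem_filter.2 ⟨hSmem x hx, hcycmem x hx⟩)
  -- upper bound: the invariant
  have hupper : ∀ b ∈ l, b.card ≤ v0.card + 1 :=
    aux_bound hVF v0.card l v0 hch (by omega) (fun h => absurd h (by omega))
  -- now parse the cycle into a closed V-path
  match l, hne with
  | b1 :: l', _ =>
    rw [List.Chain, List.chain_cons] at hch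
    obtain ⟨h01, hch⟩ := hch
    rcases aux_step hVF h01 with ⟨hw1, hb1⟩ | ⟨_, _, _, hb1⟩
    · match l' with
      | [] =>
        have hb1v : b1 = v0 := by simpa using hlast
        rw [hb1v] at hb1
        omega
      | b2 :: l'' =>
        have hlast' : (b2 :: l'').getLast? = some v0 := by
          rw [List.getLast?_cons_cons, List.getLast?_cons_cons] at hlast
          exact hlast
        obtain ⟨L, hpath, hc1, hc2⟩ := aux_build hVF v0.card v0 rfl
          (b2 :: l'').length (b2 :: l'') v0 b1 le_rfl hw1 hb1 hch
          (fun u hu => hmin u (by simp [hu]))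
          (fun u hu => hupper u (by simp [hu])) hlast'
        exact hW.2 ⟨(v0, b1), L, hpath, hc1, hc2⟩
    · have := hmin b1 (by simp)
      omega
end

section
/- For any discrete gradient V on a finite simplicial complex X, there exists an injective discrete Morse function f on X whose associated gradient V_f equals V. -/
open Finset
open scoped Classical

universe u

variable {V : Type u} [DecidableEq V]

section Stmt6Aux

/-- `s6rel W a b` : `b` steps to `a` along the vector field `W`. -/
def s6rel (W : Set (Finset V × Finset V)) (a b : Finset V × Finset V) : Prop :=
  a ∈ W ∧ b ∈ W ∧ VStep b a

lemma s6_tg_mem {W : Set (Finset V × Finset V)} {x y : Finset V × Finset V}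
    (h : Relation.TransGen (s6rel W) x y) : x ∈ W := by
  induction h with
  | single h => exact h.1
  | tail _ _ ih => exact ih

lemma s6_irrefl {W : Set (Finset V × Finset V)} (hnc : ¬ HasClosedVPath W)
    (p : Finset V × Finset V) : ¬ Relation.TransGen (s6rel W) p p := by
  intro h
  apply hnc
  have hgen : ∀ a b : Finset V × Finset V, Relation.TransGen (s6rel W) a b →
      ∃ l, IsVPath W (b :: l) ∧ VStep ((b :: l).getLast (List.cons_ne_nil b l)) a := by
    intro a b hab
    induction hab with
    | single h =>
        refine ⟨[], ⟨?_, List.isChain_singleton _⟩, ?_⟩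
        · intro q hq
          rw [List.mem_singleton] at hq
          exact hq ▸ h.2.1
        · simpa using h.2.2
    | @tail b' c h1 h2 ih =>
        obtain ⟨l, ⟨hmem, hch⟩, hlast⟩ := ih
        refine ⟨b' :: l, ⟨?_, ?_⟩, ?_⟩
        · intro q hq
          rcases List.mem_cons.mp hq with rfl | hq
          · exact h2.2.1
          · exact hmem q hq
        · exact List.isChain_cons_cons.mpr ⟨h2.2.2, hch⟩
        · rw [List.getLast_cons (List.cons_ne_nil b' l)]
          exact hlast
  obtain ⟨l, hpath, hstep⟩ := hgen p p h
  exact ⟨p, l, hpath, hstep⟩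

/-- The rank of a pair: the number of pairs reachable from it (including itself). -/
noncomputable def s6rk (W : Set (Finset V × Finset V)) (p : Finset V × Finset V) : ℕ :=
  {x | x = p ∨ Relation.TransGen (s6rel W) x p}.ncard

lemma s6_down_subset {W : Set (Finset V × Finset V)} {p : Finset V × Finset V} (hp : p ∈ W) :
    {x | x = p ∨ Relation.TransGen (s6rel W) x p} ⊆ W := by
  rintro x (rfl | h)
  · exact hp
  · exact s6_tg_mem h

lemma s6rk_le {W : Set (Finset V × Finset V)} (hfin : W.Finite)
    {p : Finset V × Finset V} (hp : p ∈ W) : s6rk W p ≤ W.ncard :=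
  Set.ncard_le_ncard (s6_down_subset hp) hfin

lemma s6rk_lt {W : Set (Finset V × Finset V)} (hnc : ¬ HasClosedVPath W) (hfin : W.Finite)
    {p q : Finset V × Finset V} (h : s6rel W p q) : s6rk W p < s6rk W q := by
  have hsub : {x | x = p ∨ Relation.TransGen (s6rel W) x p} ⊆
      {x | x = q ∨ Relation.TransGen (s6rel W) x q} := by
    rintro x (rfl | hx)
    · exact Or.inr (Relation.TransGen.single h)
    · exact Or.inr (hx.tail h)
  have hqmem : q ∈ {x | x = q ∨ Relation.TransGen (s6rel W) x q} := Or.inl rfl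
  have hqnot : q ∉ {x | x = p ∨ Relation.TransGen (s6rel W) x p} := by
    rintro (rfl | hx)
    · exact s6_irrefl hnc q (Relation.TransGen.single h)
    · exact s6_irrefl hnc q (hx.tail h)
  exact Set.ncard_lt_ncard ((Set.ssubset_iff_of_subset hsub).mpr ⟨q, hqmem, hqnot⟩)
    (hfin.subset (s6_down_subset h.2.1))

/-- The integer "pre-Morse" value of a cell. -/
noncomputable def s6H (W : Set (Finset V × Finset V)) (σ : Finset V) : ℤ :=
  2 * ((W.ncard : ℤ) + 2) * (σ.card : ℤ) +
    (if h : ∃ p, p ∈ W ∧ p.1 = σ then 2 * (s6rk W h.choose : ℤ) + 2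
     else if h2 : ∃ p, p ∈ W ∧ p.2 = σ then
       2 * (s6rk W h2.choose : ℤ) + 1 - 2 * ((W.ncard : ℤ) + 2)
     else 0)

end Stmt6Aux

/-- Every discrete gradient on a finite simplicial complex is the gradient
of some injective discrete Morse function. -/
theorem stmt_6 {V : Type u} [DecidableEq V] (X : SComplex V)
    (W : Set (Finset V × Finset V)) (hW : IsGradientOn (↑X.faces : Set (Finset V)) W) :
    ∃ f : Finset V → ℝ, Set.InjOn f (↑X.faces : Set (Finset V)) ∧
      IsDMFOn (↑X.faces : Set (Finset V)) f ∧
      gradSet (↑X.faces : Set (Finset V)) f = W := by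
  classical
  obtain ⟨⟨hWmem, hWmatch⟩, hWnc⟩ := hW
  have hWsub : W ⊆ (↑X.faces : Set (Finset V)) ×ˢ (↑X.faces : Set (Finset V)) := by
    intro p hp
    exact Set.mem_prod.mpr ⟨(hWmem p hp).1, (hWmem p hp).2.1⟩
  have hWfin : W.Finite :=
    (Set.Finite.prod X.faces.finite_toSet X.faces.finite_toSet).subset hWsub
  have hbot : ∀ p ∈ W, ∀ q ∈ W, p.1 = q.1 → p = q := by
    intro p hp q hq h
    by_contra hne
    exact (hWmatch p hp q hq hne).1 h
  have htop : ∀ p ∈ W, ∀ q ∈ W, p.2 = q.2 → p = q := by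
    intro p hp q hq h
    by_contra hne
    exact (hWmatch p hp q hq hne).2.2.2 h
  have hbt : ∀ p ∈ W, ∀ q ∈ W, p.1 ≠ q.2 := by
    intro p hp q hq
    by_cases hpq : p = q
    · subst hpq
      intro h
      have hc := (hWmem p hp).2.2.2
      rw [h] at hc
      omega
    · exact (hWmatch p hp q hq hpq).2.1
  -- evaluation of s6H
  have Hbot : ∀ p ∈ W, s6H W p.1 =
      2 * ((W.ncard : ℤ) + 2) * (p.1.card : ℤ) + (2 * (s6rk W p : ℤ) + 2) := by
    intro p hp
    have hex : ∃ q, q ∈ W ∧ q.1 = p.1 := ⟨p, hp, rfl⟩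
    have hch : hex.choose = p := hbot _ hex.choose_spec.1 _ hp hex.choose_spec.2
    simp only [s6H, dif_pos hex, hch]
  have Htop : ∀ p ∈ W, s6H W p.2 =
      2 * ((W.ncard : ℤ) + 2) * (p.2.card : ℤ) +
        (2 * (s6rk W p : ℤ) + 1 - 2 * ((W.ncard : ℤ) + 2)) := by
    intro p hp
    have hnb : ¬ ∃ q, q ∈ W ∧ q.1 = p.2 := by
      rintro ⟨q, hq, hq1⟩
      exact hbt q hq p hp hq1
    have hex : ∃ q, q ∈ W ∧ q.2 = p.2 := ⟨p, hp, rfl⟩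
    have hch : hex.choose = p := htop _ hex.choose_spec.1 _ hp hex.choose_spec.2
    simp only [s6H, dif_neg hnb, dif_pos hex, hch]
  have Hcrit : ∀ σ : Finset V, (¬ ∃ q, q ∈ W ∧ q.1 = σ) → (¬ ∃ q, q ∈ W ∧ q.2 = σ) →
      s6H W σ = 2 * ((W.ncard : ℤ) + 2) * (σ.card : ℤ) := by
    intro σ h1 h2
    simp only [s6H, dif_neg h1, dif_neg h2, add_zero]
  -- key inequality: matched pairs decrease, unmatched cover pairs increase
  have key2 : ∀ α β : Finset V, Face1 α β → (α, β) ∈ W → s6H W β < s6H W α := by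
    intro α β hf hp
    have e1 := Hbot _ hp
    have e2 := Htop _ hp
    simp only at e1 e2
    have hc : ((β : Finset V).card : ℤ) = (α.card : ℤ) + 1 := by exact_mod_cast hf.2.symm
    rw [e1, e2, hc]
    ring_nf
    linarith
  have key : ∀ α β : Finset V, Face1 α β → (α, β) ∉ W → s6H W α < s6H W β := by
    intro α β hf hnW
    have hc : ((β : Finset V).card : ℤ) = (α.card : ℤ) + 1 := by exact_mod_cast hf.2.symm
    by_cases htβ : ∃ q, q ∈ W ∧ q.2 = β
    · -- β is the top of a matched pair q
      obtain ⟨q, hq, hq2⟩ := htβ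
      have e2 : s6H W β = 2 * ((W.ncard : ℤ) + 2) * (β.card : ℤ) +
          (2 * (s6rk W q : ℤ) + 1 - 2 * ((W.ncard : ℤ) + 2)) := by
        rw [← hq2]; exact Htop q hq
      by_cases hbα : ∃ p, p ∈ W ∧ p.1 = α
      · -- α is the bottom of a matched pair p : a V-step from q to p
        obtain ⟨p, hp, hp1⟩ := hbα
        have e1 : s6H W α = 2 * ((W.ncard : ℤ) + 2) * (α.card : ℤ) +
            (2 * (s6rk W p : ℤ) + 2) := by
          rw [← hp1]; exact Hbot p hp
        have hne : p.1 ≠ q.1 := by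
          intro h
          apply hnW
          have : q = (α, β) := Prod.ext_iff.mpr ⟨by rw [← h, hp1], hq2⟩
          rwa [this] at hq
        have hrel : s6rel W p q := ⟨hp, hq, ⟨by rw [hp1, hq2]; exact hf, hne⟩⟩
        have hlt : s6rk W p < s6rk W q := s6rk_lt hWnc hWfin hrel
        have hlt' : (s6rk W p : ℤ) < (s6rk W q : ℤ) := by exact_mod_cast hlt
        rw [e1, e2, hc]
        ring_nf
        linarith
      · by_cases htα : ∃ r, r ∈ W ∧ r.2 = α
        · -- α is the top of a matched pair r
          obtain ⟨r, hr, hr2⟩ := htα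
          have e1 : s6H W α = 2 * ((W.ncard : ℤ) + 2) * (α.card : ℤ) +
              (2 * (s6rk W r : ℤ) + 1 - 2 * ((W.ncard : ℤ) + 2)) := by
            rw [← hr2]; exact Htop r hr
          have hb1 : (s6rk W r : ℤ) ≤ (W.ncard : ℤ) := by
            exact_mod_cast s6rk_le hWfin hr
          have hb2 : (0 : ℤ) ≤ (s6rk W q : ℤ) := Int.ofNat_nonneg _
          rw [e1, e2, hc]
          ring_nf
          linarith
        · -- α is critical
          have e1 := Hcrit α hbα htα
          have hb2 : (0 : ℤ) ≤ (s6rk W q : ℤ) := Int.ofNat_nonneg _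
          have hb3 : (0 : ℤ) ≤ (W.ncard : ℤ) := Int.ofNat_nonneg _
          rw [e1, e2, hc]
          ring_nf
          linarith
    · -- β is a bottom or critical : s6H W β ≥ base value of β
      have e2 : 2 * ((W.ncard : ℤ) + 2) * (β.card : ℤ) ≤ s6H W β := by
        by_cases hbβ : ∃ q, q ∈ W ∧ q.1 = β
        · obtain ⟨q, hq, hq1⟩ := hbβ
          have e := Hbot q hq
          rw [hq1] at e
          have : (0 : ℤ) ≤ (s6rk W q : ℤ) := Int.ofNat_nonneg _
          rw [e]; linarith
        · rw [Hcrit β hbβ htβ]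
      have e1 : s6H W α ≤ 2 * ((W.ncard : ℤ) + 2) * (α.card : ℤ) +
          (2 * (W.ncard : ℤ) + 2) := by
        by_cases hbα : ∃ p, p ∈ W ∧ p.1 = α
        · obtain ⟨p, hp, hp1⟩ := hbα
          have e := Hbot p hp
          rw [hp1] at e
          have : (s6rk W p : ℤ) ≤ (W.ncard : ℤ) := by exact_mod_cast s6rk_le hWfin hp
          rw [e]; linarith
        · by_cases htα : ∃ r, r ∈ W ∧ r.2 = α
          · obtain ⟨r, hr, hr2⟩ := htα
            have e := Htop r hr
            rw [hr2] at e
            have : (s6rk W r : ℤ) ≤ (W.ncard : ℤ) := by exact_mod_cast s6rk_le hWfin hr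
            rw [e]; linarith
          · rw [Hcrit α hbα htα]
            have : (0 : ℤ) ≤ (W.ncard : ℤ) := Int.ofNat_nonneg _
            linarith
      rw [hc] at e2
      ring_nf at e1 e2
      linarith
  -- the final function
  set F : ℤ := (X.faces.card : ℤ) + 1 with hF
  set fZ : Finset V → ℤ := fun σ => s6H W σ * F + (X.faces.toList.idxOf σ : ℤ) with hfZ
  set f : Finset V → ℝ := fun σ => ((fZ σ : ℤ) : ℝ) with hf
  have hι_lt : ∀ σ : Finset V, (X.faces.toList.idxOf σ : ℤ) < F := by
    intro σ
    have h1 : X.faces.toList.idxOf σ ≤ X.faces.toList.length := List.idxOf_le_length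
    have h2 : X.faces.toList.length = X.faces.card := Finset.length_toList _
    rw [hF]
    have : X.faces.toList.idxOf σ < X.faces.card + 1 := by omega
    exact_mod_cast this
  have hmono : ∀ σ τ : Finset V, s6H W σ < s6H W τ → f σ < f τ := by
    intro σ τ h
    have hZ : fZ σ < fZ τ := by
      have h0 : (0 : ℤ) ≤ F := by rw [hF]; positivity
      have h1 : (s6H W σ + 1) * F ≤ s6H W τ * F :=
        mul_le_mul_of_nonneg_right (by omega) h0
      have h2 := hι_lt σ
      have h3 : (0 : ℤ) ≤ (X.faces.toList.idxOf τ : ℤ) := Int.ofNat_nonneg _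
      simp only [hfZ]
      nlinarith
    simp only [hf]
    exact_mod_cast hZ
  have hinj : Set.InjOn f (↑X.faces : Set (Finset V)) := by
    intro σ hσ τ hτ hfeq
    have hZ : fZ σ = fZ τ := by
      simp only [hf] at hfeq
      exact_mod_cast hfeq
    simp only [hfZ] at hZ
    have hmod : (X.faces.toList.idxOf σ : ℤ) = (X.faces.toList.idxOf τ : ℤ) := by
      have e0 : ((X.faces.toList.idxOf σ : ℤ) + F * s6H W σ) % F
          = ((X.faces.toList.idxOf τ : ℤ) + F * s6H W τ) % F := by
        congr 1
        linarith
      rw [Int.add_mul_emod_self_left, Int.add_mul_emod_self_left,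
        Int.emod_eq_of_lt (Int.ofNat_nonneg _) (hι_lt σ),
        Int.emod_eq_of_lt (Int.ofNat_nonneg _) (hι_lt τ)] at e0
      exact e0
    have hidx : X.faces.toList.idxOf σ = X.faces.toList.idxOf τ := by exact_mod_cast hmod
    have hσl : σ ∈ X.faces.toList := Finset.mem_toList.mpr hσ
    have hτl : τ ∈ X.faces.toList := Finset.mem_toList.mpr hτ
    exact (List.idxOf_inj hσl).mp hidx
  refine ⟨f, hinj, ?_, ?_⟩
  · -- IsDMFOn
    intro α hα
    constructor
    · intro β hβ β' hβ'
      obtain ⟨hβS, hβf, hβle⟩ := hβ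
      obtain ⟨hβ'S, hβ'f, hβ'le⟩ := hβ'
      have h1 : (α, β) ∈ W := by
        by_contra h
        exact absurd hβle (not_le.mpr (hmono _ _ (key α β hβf h)))
      have h2 : (α, β') ∈ W := by
        by_contra h
        exact absurd hβ'le (not_le.mpr (hmono _ _ (key α β' hβ'f h)))
      have := hbot _ h1 _ h2 rfl
      exact (Prod.ext_iff.mp this).2
    · intro ν hν ν' hν'
      obtain ⟨hνS, hνf, hνle⟩ := hν
      obtain ⟨hν'S, hν'f, hν'le⟩ := hν'
      have h1 : (ν, α) ∈ W := by
        by_contra h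
        exact absurd hνle (not_le.mpr (hmono _ _ (key ν α hνf h)))
      have h2 : (ν', α) ∈ W := by
        by_contra h
        exact absurd hν'le (not_le.mpr (hmono _ _ (key ν' α hν'f h)))
      have := htop _ h1 _ h2 rfl
      exact (Prod.ext_iff.mp this).1
  · -- gradSet = W
    ext p
    simp only [gradSet, Set.mem_setOf_eq]
    constructor
    · rintro ⟨h1, h2, h3, h4⟩
      by_contra h
      have h' : (p.1, p.2) ∉ W := by simpa using h
      exact absurd h4 (not_le.mpr (hmono _ _ (key p.1 p.2 h3 h')))
    · intro hp
      refine ⟨(hWmem p hp).1, (hWmem p hp).2.1, (hWmem p hp).2.2, le_of_lt (hmono _ _ ?_)⟩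
      exact key2 p.1 p.2 (hWmem p hp).2.2 (by simpa using hp)
end

section
/- Let (X, T) be a finite simplicial pair, V_K a discrete gradient on K = X \ T (all pairs involve only simplices of K), and V_X its extension to X in which every simplex of T is critical. Then the Morse chain complex of K, generated in degree i by the critical i-cells of V_K with boundary given by counting gradient paths, maps isomorphically (as a chain complex) onto the quotient Morse complex M(X)/M(T). -/
open Finset
open scoped Classical

universe u

variable {V : Type u} [DecidableEq V]

/-- The submodule of the Morse complex of `X` consisting of chains supported on the
critical cells lying in `T` (this is the image of `M(T) = C(T)`). -/
noncomputable def TSub {V : Type u} [DecidableEq V] [LinearOrder V] [Fintype V]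
    (X T : SComplex V) (W : Set (Finset V × Finset V)) (i : ℕ) :
    Submodule ℤ (cellsD (critOf W (↑X.faces : Set (Finset V))) i → ℤ) :=
  ⨅ (s : cellsD (critOf W (↑X.faces : Set (Finset V))) i) (_ : s.1 ∉ T.faces),
    LinearMap.ker (LinearMap.proj (R := ℤ) (φ := fun _ => ℤ) s)

/-- The extension-by-zero map from the Morse chains of `K` to the Morse chains of `X`. -/
noncomputable def extMap {V : Type u} [DecidableEq V] [LinearOrder V] [Fintype V]
    (X T : SComplex V) (W : Set (Finset V × Finset V)) (i : ℕ) :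
    (cellsD (critOf W (Kset X T)) i → ℤ) →ₗ[ℤ]
      (cellsD (critOf W (↑X.faces : Set (Finset V))) i → ℤ) :=
  LinearMap.pi fun s =>
    if h : s.1 ∈ critOf W (Kset X T) then
      LinearMap.proj (R := ℤ) (φ := fun _ => ℤ)
        (⟨s.1, h, s.2.2⟩ : cellsD (critOf W (Kset X T)) i)
    else 0

/-- The canonical chain map `M(K) → M(X)/M(T)`. -/
noncomputable def qext {V : Type u} [DecidableEq V] [LinearOrder V] [Fintype V]
    (X T : SComplex V) (W : Set (Finset V × Finset V)) (i : ℕ) :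
    (cellsD (critOf W (Kset X T)) i → ℤ) →ₗ[ℤ]
      ((cellsD (critOf W (↑X.faces : Set (Finset V))) i → ℤ) ⧸ TSub X T W i) :=
  (TSub X T W i).mkQ.comp (extMap X T W i)

section Aux

variable {V : Type u} [DecidableEq V] [LinearOrder V] [Fintype V]

lemma critK_iff (X T : SComplex V) (W : Set (Finset V × Finset V)) (s : Finset V) :
    s ∈ critOf W (Kset X T) ↔
      s ∈ critOf W (↑X.faces : Set (Finset V)) ∧ s ∉ T.faces := by
  simp only [critOf, Kset, Set.mem_diff, Set.mem_setOf_eq]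
  tauto

lemma mem_TSub_iff (X T : SComplex V) (W : Set (Finset V × Finset V)) (i : ℕ)
    (y : cellsD (critOf W (↑X.faces : Set (Finset V))) i → ℤ) :
    y ∈ TSub X T W i ↔
      ∀ s : cellsD (critOf W (↑X.faces : Set (Finset V))) i, s.1 ∉ T.faces → y s = 0 := by
  simp [TSub, Submodule.mem_iInf, LinearMap.mem_ker]

lemma extMap_apply (X T : SComplex V) (W : Set (Finset V × Finset V)) (i : ℕ)
    (x : cellsD (critOf W (Kset X T)) i → ℤ)
    (s : cellsD (critOf W (↑X.faces : Set (Finset V))) i) :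
    extMap X T W i x s =
      if h : s.1 ∈ critOf W (Kset X T) then x ⟨s.1, h, s.2.2⟩ else 0 := by
  unfold extMap
  rw [LinearMap.pi_apply]
  split_ifs with h
  · exact congrArg (fun f : (cellsD (critOf W (Kset X T)) i → ℤ) →ₗ[ℤ] ℤ => f x) (dif_pos h)
  · exact congrArg (fun f : (cellsD (critOf W (Kset X T)) i → ℤ) →ₗ[ℤ] ℤ => f x) (dif_neg h)

lemma sum_ext (X T : SComplex V) (W : Set (Finset V × Finset V)) (i : ℕ)
    (c : Finset V → ℤ) (x : cellsD (critOf W (Kset X T)) i → ℤ) :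
    ∑ τ : cellsD (critOf W (Kset X T)) i, c τ.1 * x τ =
      ∑ τ' : cellsD (critOf W (↑X.faces : Set (Finset V))) i,
        c τ'.1 * extMap X T W i x τ' := by
  rw [← Finset.sum_filter_of_ne
    (p := fun τ' : cellsD (critOf W (↑X.faces : Set (Finset V))) i =>
      τ'.1 ∈ critOf W (Kset X T))
    (by
      intro τ' _ hne
      by_contra h
      rw [extMap_apply, dif_neg h, mul_zero] at hne
      exact hne rfl)]
  refine Finset.sum_bij
    (fun (τ : cellsD (critOf W (Kset X T)) i) _ =>
      (⟨τ.1, ((critK_iff X T W τ.1).mp τ.2.1).1, τ.2.2⟩ :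
        cellsD (critOf W (↑X.faces : Set (Finset V))) i))
    ?_ ?_ ?_ ?_
  · intro a _
    exact Finset.mem_filter.mpr ⟨Finset.mem_univ _, a.2.1⟩
  · intro a₁ _ a₂ _ h
    have h2 := congrArg
      (fun z : cellsD (critOf W (↑X.faces : Set (Finset V))) i => z.1) h
    exact Subtype.ext h2
  · intro b hb
    simp only [Finset.mem_filter, Finset.mem_univ, true_and] at hb
    exact ⟨⟨b.1, hb, b.2.2⟩, Finset.mem_univ _, Subtype.ext rfl⟩
  · intro a _
    exact congrArg (fun z => c a.1 * z)
      ((extMap_apply X T W i x _).trans (dif_pos a.2.1)).symm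

end Aux

/-- For a gradient `W` on the open complex `K = X \ T`, extended to `X` with
all cells of `T` critical, the Morse complex of `K` maps isomorphically, as a chain
complex, onto the quotient Morse complex `M(X)/M(T)`. -/
theorem stmt_9 {V : Type u} [DecidableEq V] [LinearOrder V] [Fintype V]
    (X T : SComplex V) (hT : T.faces ⊆ X.faces)
    (W : Set (Finset V × Finset V)) (hW : IsGradientOn (Kset X T) W) :
    ∀ i : ℕ, Function.Bijective (qext X T W i) ∧
      ∀ x : cellsD (critOf W (Kset X T)) (i + 1) → ℤ,
        qext X T W i (morseBd W (critOf W (Kset X T)) i x) =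
          (TSub X T W i).mkQ
            (morseBd W (critOf W (↑X.faces : Set (Finset V))) i
              (extMap X T W (i + 1) x)) := by
  intro i
  constructor
  · constructor
    · refine (injective_iff_map_eq_zero _).mpr ?_
      intro x hx
      have hmem : extMap X T W i x ∈ TSub X T W i := by
        rw [qext, LinearMap.comp_apply, Submodule.mkQ_apply,
          Submodule.Quotient.mk_eq_zero] at hx
        exact hx
      rw [mem_TSub_iff] at hmem
      funext s
      have h1 := (critK_iff X T W s.1).mp s.2.1
      have := hmem ⟨s.1, h1.1, s.2.2⟩ h1.2
      exact ((extMap_apply X T W i x _).trans (dif_pos s.2.1)).symm.trans this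
    · intro y
      obtain ⟨y₀, rfl⟩ := Submodule.mkQ_surjective (TSub X T W i) y
      refine ⟨fun s => y₀ ⟨s.1, ((critK_iff X T W s.1).mp s.2.1).1, s.2.2⟩, ?_⟩
      rw [qext, LinearMap.comp_apply, Submodule.mkQ_apply, Submodule.mkQ_apply,
        Submodule.Quotient.eq]
      rw [mem_TSub_iff]
      intro s hs
      have hsK : s.1 ∈ critOf W (Kset X T) := (critK_iff X T W s.1).mpr ⟨s.2.1, hs⟩
      rw [Pi.sub_apply, extMap_apply, dif_pos hsK, sub_eq_zero]
      rfl
  · intro x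
    rw [qext, LinearMap.comp_apply, Submodule.mkQ_apply, Submodule.mkQ_apply,
      Submodule.Quotient.eq, mem_TSub_iff]
    intro σ hσ
    have hσK : σ.1 ∈ critOf W (Kset X T) := (critK_iff X T W σ.1).mpr ⟨σ.2.1, hσ⟩
    rw [Pi.sub_apply, extMap_apply, dif_pos hσK, sub_eq_zero]
    show morseBd W (critOf W (Kset X T)) i x ⟨σ.1, hσK, σ.2.2⟩ =
      morseBd W (critOf W (↑X.faces : Set (Finset V))) i (extMap X T W (i + 1) x) σ
    simp only [morseBd, Matrix.mulVecLin_apply, Matrix.mulVec, dotProduct,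
      Matrix.of_apply]
    exact sum_ext X T W (i + 1) (fun t => morseCoeff W t σ.1) x
end

section
/- Let K = X \ T be an open simplicial complex with a discrete gradient V_K having c_i critical cells of dimension i. Then rank H_i^{BM}(K) ≤ c_i for all i, where H_i^{BM}(K) ≅ H_i(X, T) is Borel–Moore (relative) homology. -/
open Finset
open scoped Classical

universe u

variable {V : Type u} [DecidableEq V]

section MorseAux

open Finset
open scoped Classical

universe u'
variable {V : Type u'} [DecidableEq V] [LinearOrder V] [Fintype V]

lemma incSign_eq_zero {σ τ : Finset V} (h : ¬ Face1 σ τ) : incSign σ τ = 0 := by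
  simp [incSign, h]

lemma incSign_of_insert {ρ : Finset V} {u : V} (hu : u ∉ ρ) :
    incSign ρ (insert u ρ) = (-1 : ℤ) ^ ((ρ.filter fun x => x < u).card) := by
  have hface : Face1 ρ (insert u ρ) := ⟨subset_insert _ _, by rw [card_insert_of_notMem hu]⟩
  rw [incSign, if_pos hface]
  have h1 : insert u ρ \ ρ = {u} := by
    ext x; simp only [mem_sdiff, mem_insert, mem_singleton]
    constructor
    · rintro ⟨h | h, h2⟩ <;> [exact h; exact absurd h h2]
    · rintro rfl; exact ⟨Or.inl rfl, hu⟩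
  rw [h1, sum_singleton]
  congr 2
  rw [filter_insert, if_neg (lt_irrefl u)]

set_option linter.unusedSectionVars false

lemma cancel_aux {ρ : Finset V} {u v : V} (hu : u ∉ ρ) (hv : v ∉ ρ) (huv : u < v) :
    incSign ρ (insert u ρ) * incSign (insert u ρ) (insert u (insert v ρ)) +
    incSign ρ (insert v ρ) * incSign (insert v ρ) (insert u (insert v ρ)) = 0 := by
  have hvu : v ∉ insert u ρ := by simp [Finset.mem_insert, huv.ne', hv]
  have huv' : u ∉ insert v ρ := by simp [Finset.mem_insert, huv.ne, hu]
  have e1 : insert u (insert v ρ) = insert v (insert u ρ) := Finset.insert_comm _ _ _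
  rw [incSign_of_insert hu, incSign_of_insert hv, e1, incSign_of_insert hvu,
    show insert v (insert u ρ) = insert u (insert v ρ) from e1.symm, incSign_of_insert huv']
  have f1 : ((insert u ρ).filter fun x => x < v).card = (ρ.filter fun x => x < v).card + 1 := by
    rw [filter_insert, if_pos huv, card_insert_of_notMem (fun h => hu (mem_filter.1 h).1)]
  have f2 : ((insert v ρ).filter fun x => x < u).card = (ρ.filter fun x => x < u).card := by
    rw [filter_insert, if_neg (asymm huv)]
  rw [f1, f2, pow_succ]
  ring

lemma mem_K_of_between {X T : SComplex V} {ρ σ τ : Finset V} (hρ : ρ ∈ Kset X T)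
    (hτ : τ ∈ Kset X T) (h1 : ρ ⊆ σ) (h2 : σ ⊆ τ) : σ ∈ Kset X T := by
  have hρne : ρ.Nonempty := X.nonempty_of_mem ρ hρ.1
  have hσne : σ.Nonempty := hρne.mono h1
  refine ⟨X.down_closed τ hτ.1 σ h2 hσne, fun hσT => hρ.2 (T.down_closed σ hσT ρ h1 hρne)⟩

lemma bd_squared_key (X T : SComplex V) {i : ℕ} {ρ τ : Finset V} (hρ : ρ ∈ Kset X T)
    (hτ : τ ∈ Kset X T) (hρc : ρ.card = i) (hτc : τ.card = i + 2) (hsub : ρ ⊆ τ)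
    {u v : V} (hlt : u < v) (hset : τ \ ρ = {u, v}) :
    ∑ σ : cellsD (Kset X T) (i+1), incSign ρ σ.1 * incSign σ.1 τ = 0 := by
  have hu : u ∈ τ \ ρ := by rw [hset]; exact mem_insert_self _ _
  have hv : v ∈ τ \ ρ := by rw [hset]; simp
  have huρ : u ∉ ρ := (mem_sdiff.1 hu).2
  have hvρ : v ∉ ρ := (mem_sdiff.1 hv).2
  have hτe : τ = insert u (insert v ρ) := by
    ext x
    simp only [mem_insert]
    constructor
    · intro hx
      by_cases hxρ : x ∈ ρ
      · exact Or.inr (Or.inr hxρ)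
      · have : x ∈ τ \ ρ := mem_sdiff.2 ⟨hx, hxρ⟩
        rw [hset] at this
        simp only [mem_insert, mem_singleton] at this
        tauto
    · rintro (rfl | rfl | hx)
      · exact (mem_sdiff.1 hu).1
      · exact (mem_sdiff.1 hv).1
      · exact hsub hx
  have hsubu : insert u ρ ⊆ τ := insert_subset (mem_sdiff.1 hu).1 hsub
  have hsubv : insert v ρ ⊆ τ := insert_subset (mem_sdiff.1 hv).1 hsub
  have hmemu : insert u ρ ∈ Kset X T := mem_K_of_between hρ hτ (subset_insert _ _) hsubu
  have hmemv : insert v ρ ∈ Kset X T := mem_K_of_between hρ hτ (subset_insert _ _) hsubv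
  set Su : cellsD (Kset X T) (i+1) :=
    ⟨insert u ρ, hmemu, by rw [card_insert_of_notMem huρ, hρc]⟩ with hSu
  set Sv : cellsD (Kset X T) (i+1) :=
    ⟨insert v ρ, hmemv, by rw [card_insert_of_notMem hvρ, hρc]⟩ with hSv
  have hne : Su ≠ Sv := by
    intro h
    have : v ∈ insert u ρ := by
      rw [show insert u ρ = insert v ρ from congrArg Subtype.val h]; simp
    simp only [mem_insert] at this
    rcases this with h' | h'
    · exact absurd h' hlt.ne'
    · exact hvρ h'
  have hzero : ∀ x : cellsD (Kset X T) (i+1), x ∈ (Finset.univ : Finset _) →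
      x ∉ ({Su, Sv} : Finset _) → incSign ρ x.1 * incSign x.1 τ = 0 := by
    intro x _ hx
    by_cases h1 : Face1 ρ x.1
    · by_cases h2 : Face1 x.1 τ
      · exfalso
        have hcd : (x.1 \ ρ).card = 1 := by
          rw [card_sdiff_of_subset h1.1, x.2.2, hρc]; omega
        obtain ⟨w, hw⟩ := Finset.card_eq_one.1 hcd
        have hwmem : w ∈ ({u, v} : Finset V) := by
          rw [← hset]
          exact sdiff_subset_sdiff h2.1 (le_refl _) (hw ▸ mem_singleton_self w)
        have hxval : x.1 = insert w ρ := by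
          rw [← union_sdiff_of_subset h1.1, hw, union_comm, ← insert_eq]
        simp only [mem_insert, mem_singleton] at hwmem hx
        apply hx
        rcases hwmem with rfl | rfl
        · exact Or.inl (Subtype.ext hxval)
        · exact Or.inr (Subtype.ext hxval)
      · rw [incSign_eq_zero h2, mul_zero]
    · rw [incSign_eq_zero h1, zero_mul]
  rw [← Finset.sum_subset (Finset.subset_univ ({Su, Sv} : Finset _)) hzero,
    Finset.sum_pair hne]
  simp only [hSu, hSv]
  rw [hτe]
  exact cancel_aux huρ hvρ hlt

lemma bd_squared (X T : SComplex V) {i : ℕ} {ρ τ : Finset V} (hρ : ρ ∈ Kset X T)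
    (hτ : τ ∈ Kset X T) (hρc : ρ.card = i) (hτc : τ.card = i + 2) :
    ∑ σ : cellsD (Kset X T) (i+1), incSign ρ σ.1 * incSign σ.1 τ = 0 := by
  by_cases hsub : ρ ⊆ τ
  · have hcd : (τ \ ρ).card = 2 := by rw [card_sdiff_of_subset hsub, hρc, hτc]; omega
    obtain ⟨u, v, huv, hset⟩ := Finset.card_eq_two.1 hcd
    rcases huv.lt_or_gt with hlt | hlt
    · exact bd_squared_key X T hρ hτ hρc hτc hsub hlt hset
    · exact bd_squared_key X T hρ hτ hρc hτc hsub hlt (by rw [hset, pair_comm])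
  · apply Finset.sum_eq_zero
    intro σ _
    by_cases h1 : Face1 ρ σ.1
    · by_cases h2 : Face1 σ.1 τ
      · exact absurd (h1.1.trans h2.1) hsub
      · rw [incSign_eq_zero h2, mul_zero]
    · rw [incSign_eq_zero h1, zero_mul]

lemma incSign_ne_zero {σ τ : Finset V} (h : Face1 σ τ) : incSign σ τ ≠ 0 := by
  rw [incSign, if_pos h]
  exact pow_ne_zero _ (by norm_num)

lemma face1_of_incSign_ne_zero {σ τ : Finset V} (h : incSign σ τ ≠ 0) : Face1 σ τ := by
  by_contra hc; exact h (incSign_eq_zero hc)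

/-- The step relation between matched pairs. -/
def Rrel (W : Set (Finset V × Finset V)) (p q : Finset V × Finset V) : Prop :=
  p ∈ W ∧ q ∈ W ∧ VStep p q

lemma path_of_reflTransGen {W : Set (Finset V × Finset V)} {p c : Finset V × Finset V}
    (hp : p ∈ W) (h : Relation.ReflTransGen (Rrel W) p c) :
    ∃ l, IsVPath W (p :: l) ∧ (p :: l).getLast? = some c := by
  induction h with
  | refl => exact ⟨[], ⟨by simpa using hp, List.isChain_singleton p⟩, rfl⟩
  | @tail b c hab hbc ih =>
    obtain ⟨l, ⟨hmem, hchain⟩, hlast⟩ := ih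
    refine ⟨l ++ [c], ⟨?_, ?_⟩, ?_⟩
    · intro x hx
      rw [show p :: (l ++ [c]) = (p :: l) ++ [c] by simp] at hx
      rcases List.mem_append.1 hx with hx | hx
      · exact hmem x hx
      · rw [List.mem_singleton.1 hx]; exact hbc.2.1
    · rw [show p :: (l ++ [c]) = (p :: l) ++ [c] by simp]
      unfold List.Chain'
      rw [List.isChain_append]
      refine ⟨hchain, List.isChain_singleton c, ?_⟩
      intro x hx y hy
      rw [hlast, Option.mem_some_iff] at hx
      simp only [List.head?_cons, Option.mem_some_iff] at hy
      rw [← hx, ← hy]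
      exact hbc.2.2
    · rw [show p :: (l ++ [c]) = (p :: l) ++ [c] by simp, List.getLast?_concat]

lemma transGen_irrefl {S : Set (Finset V)} {W : Set (Finset V × Finset V)}
    (hW : IsGradientOn S W) (p : Finset V × Finset V) :
    ¬ Relation.TransGen (Rrel W) p p := by
  intro h
  rw [Relation.TransGen.tail'_iff] at h
  obtain ⟨c, hrt, hcp⟩ := h
  obtain ⟨l, hpath, hlast⟩ := path_of_reflTransGen hcp.2.1 hrt
  apply hW.2
  refine ⟨p, l, hpath, ?_⟩
  have hgl : (p :: l).getLast (List.cons_ne_nil p l) = c := by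
    have := List.getLast?_eq_getLast (List.cons_ne_nil p l)
    rw [this, Option.some_inj] at hlast
    exact hlast
  rw [hgl]
  exact hcp.2.2

/-- The matched pairs whose upper cell has `j + 1` vertices. -/
def Pairs (W : Set (Finset V × Finset V)) (j : ℕ) : Type _ :=
  {p : Finset V × Finset V // p ∈ W ∧ p.2.card = j + 1}

noncomputable instance (W : Set (Finset V × Finset V)) (j : ℕ) : Fintype (Pairs W j) := by
  unfold Pairs; infer_instance

lemma cols_indep (S : Set (Finset V)) {W : Set (Finset V × Finset V)}
    (hW : IsGradientOn S W) (j : ℕ) :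
    LinearIndependent ℤ (fun (p : Pairs W j) (α : cellsD S j) => incSign α.1 p.1.2) := by
  haveI : IsTrans (Finset V × Finset V) (Relation.TransGen (Rrel W)) :=
    ⟨fun _ _ _ => Relation.TransGen.trans⟩
  haveI : IsIrrefl (Finset V × Finset V) (Relation.TransGen (Rrel W)) :=
    ⟨transGen_irrefl hW⟩
  have hwf : WellFounded (Relation.TransGen (Rrel W)) :=
    Finite.wellFounded_of_trans_of_irrefl _
  rw [Fintype.linearIndependent_iff]
  intro g hg
  by_contra hcon
  push_neg at hcon
  obtain ⟨p0, hp0⟩ := hcon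
  set s : Set (Finset V × Finset V) :=
    {p | ∃ h : p ∈ W ∧ p.2.card = j + 1, g ⟨p, h⟩ ≠ 0} with hs
  have hsne : s.Nonempty := ⟨p0.1, p0.2, by exact hp0⟩
  obtain ⟨m, hms, hmin⟩ := hwf.has_min s hsne
  obtain ⟨hm, hgm⟩ := hms
  have hface : Face1 m.1 m.2 := (hW.1.1 m hm.1).2.2
  have hm1S : m.1 ∈ S := (hW.1.1 m hm.1).1
  have hm1c : m.1.card = j := by
    have := hface.2
    omega
  set α : cellsD S j := ⟨m.1, hm1S, hm1c⟩ with hα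
  have heval := congrFun hg α
  rw [Finset.sum_apply] at heval
  simp only [Pi.smul_apply, smul_eq_mul, Pi.zero_apply] at heval
  have hsum : ∑ x : Pairs W j, g x * incSign m.1 x.1.2 =
      g (⟨m, hm⟩ : Pairs W j) * incSign m.1 m.2 := by
    apply Finset.sum_eq_single
    · intro b _ hbne
      by_contra hb
      have hgb : g b ≠ 0 := fun h => hb (by rw [h, zero_mul])
      have hinc : incSign m.1 b.1.2 ≠ 0 := fun h => hb (by rw [h, mul_zero])
      have hface2 : Face1 m.1 b.1.2 := face1_of_incSign_ne_zero hinc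
      have hbnem : b.1 ≠ m := fun h => hbne (Subtype.ext h)
      have hne1 : b.1.1 ≠ m.1 := ((hW.1.2 b.1 b.2.1 m hm.1 hbnem).1 : b.1.1 ≠ m.1)
      have hstep : Rrel W b.1 m := ⟨b.2.1, hm.1, hface2, hne1.symm⟩
      exact hmin b.1 ⟨b.2, hgb⟩ (Relation.TransGen.single hstep)
    · intro h
      exact absurd (Finset.mem_univ _) h
  rw [hsum] at heval
  have hnz : incSign m.1 m.2 ≠ 0 := incSign_ne_zero hface
  rcases mul_eq_zero.1 heval with h | h
  · exact hgm h
  · exact hnz h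

lemma card_count (K : Set (Finset V)) {W : Set (Finset V × Finset V)}
    (hVF : IsVFOn K W) (i : ℕ) :
    Fintype.card (cellsD K (i+1)) = Nat.card (cellsD (critOf W K) (i+1)) +
      Fintype.card (Pairs W i) + Fintype.card (Pairs W (i+1)) := by
  classical
  set q₁ : cellsD K (i+1) → Prop := fun s => ∃ p ∈ W, p.2 = s.1 with hq₁
  set q₂ : cellsD K (i+1) → Prop := fun s => ∃ p ∈ W, p.1 = s.1 with hq₂
  have hsplit1 : (Finset.univ.filter q₁).card + (Finset.univ.filter fun s => ¬ q₁ s).card =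
      Fintype.card (cellsD K (i+1)) :=
    Finset.card_filter_add_card_filter_not _
  have hsplit2 : ((Finset.univ.filter fun s => ¬ q₁ s).filter q₂).card +
      ((Finset.univ.filter fun s => ¬ q₁ s).filter fun s => ¬ q₂ s).card =
      (Finset.univ.filter fun s => ¬ q₁ s).card :=
    Finset.card_filter_add_card_filter_not _
  have hc1 : (Finset.univ.filter q₁).card = Fintype.card (Pairs W i) := by
    rw [Fintype.card, eq_comm]
    apply Finset.card_bij (fun (p : Pairs W i) _ =>
      (⟨p.1.2, (hVF.1 p.1 p.2.1).2.1, p.2.2⟩ : cellsD K (i+1)))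
    · intro p _
      exact Finset.mem_filter.2 ⟨Finset.mem_univ _, p.1, p.2.1, rfl⟩
    · intro p _ p' _ h
      have h2 : p.1.2 = p'.1.2 := congrArg Subtype.val h
      by_contra hne
      have hne' : p.1 ≠ p'.1 := fun h' => hne (Subtype.ext h')
      exact (hVF.2 p.1 p.2.1 p'.1 p'.2.1 hne').2.2.2 h2
    · intro s hs
      obtain ⟨p, hpW, hps⟩ := (Finset.mem_filter.1 hs).2
      refine ⟨⟨p, hpW, by rw [hps]; exact s.2.2⟩, Finset.mem_univ _, ?_⟩
      exact Subtype.ext hps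
  have hc2 : ((Finset.univ.filter fun s => ¬ q₁ s).filter q₂).card =
      Fintype.card (Pairs W (i+1)) := by
    rw [Fintype.card, eq_comm]
    have hcard1 : ∀ p : Pairs W (i+1), p.1.1.card = i + 1 := by
      intro p
      have := (hVF.1 p.1 p.2.1).2.2.2
      have := p.2.2
      omega
    apply Finset.card_bij (fun (p : Pairs W (i+1)) _ =>
      (⟨p.1.1, (hVF.1 p.1 p.2.1).1, hcard1 p⟩ : cellsD K (i+1)))
    · intro p _
      refine Finset.mem_filter.2 ⟨Finset.mem_filter.2 ⟨Finset.mem_univ _, ?_⟩, p.1, p.2.1, rfl⟩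
      rintro ⟨q, hqW, hq2⟩
      by_cases hqp : q = p.1
      · have hf := (hVF.1 p.1 p.2.1).2.2.2
        have he : q.2 = p.1.1 := hq2
        have he2 : p.1.2 = p.1.1 := by
          have h3 : p.1.2 = q.2 := by rw [hqp]
          rw [h3]; exact he
        have := congrArg Finset.card he2
        omega
      · exact (hVF.2 q hqW p.1 p.2.1 hqp).2.2.1 hq2
    · intro p _ p' _ h
      have h2 : p.1.1 = p'.1.1 := congrArg Subtype.val h
      by_contra hne
      have hne' : p.1 ≠ p'.1 := fun h' => hne (Subtype.ext h')
      exact (hVF.2 p.1 p.2.1 p'.1 p'.2.1 hne').1 h2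
    · intro s hs
      obtain ⟨p, hpW, hps⟩ := (Finset.mem_filter.1 hs).2
      have hface := (hVF.1 p hpW).2.2.2
      refine ⟨⟨p, hpW, ?_⟩, Finset.mem_univ _, Subtype.ext hps⟩
      have : p.1.card = i + 1 := by rw [hps]; exact s.2.2
      omega
  have hc3 : ((Finset.univ.filter fun s => ¬ q₁ s).filter fun s => ¬ q₂ s).card =
      Nat.card (cellsD (critOf W K) (i+1)) := by
    rw [Nat.card_eq_fintype_card, Fintype.card, eq_comm]
    apply Finset.card_bij (fun (s : cellsD (critOf W K) (i+1)) _ =>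
      (⟨s.1, s.2.1.1, s.2.2⟩ : cellsD K (i+1)))
    · intro s _
      refine Finset.mem_filter.2 ⟨Finset.mem_filter.2 ⟨Finset.mem_univ _, ?_⟩, ?_⟩
      · rintro ⟨p, hpW, hp2⟩
        exact (s.2.1.2 p hpW).2 hp2
      · rintro ⟨p, hpW, hp1⟩
        exact (s.2.1.2 p hpW).1 hp1
    · intro s _ s' _ h
      exact Subtype.ext (Subtype.mk_eq_mk.1 h)
    · intro s hs
      replace hs : (s ∈ Finset.univ ∧ ¬ q₁ s) ∧ ¬ q₂ s :=
        ⟨Finset.mem_filter.1 (Finset.mem_filter.1 hs).1, (Finset.mem_filter.1 hs).2⟩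
      refine ⟨⟨s.1, ⟨s.2.1, ?_⟩, s.2.2⟩, Finset.mem_univ _, rfl⟩
      intro p hpW
      constructor
      · intro h; exact hs.2 ⟨p, hpW, h⟩
      · intro h; exact hs.1.2 ⟨p, hpW, h⟩
  omega

theorem stmt_11' {V : Type u} [DecidableEq V] [LinearOrder V] [Fintype V]
    (X T : SComplex V) (hT : T.faces ⊆ X.faces)
    (W : Set (Finset V × Finset V)) (hW : IsGradientOn (Kset X T) W) (i : ℕ) :
    Module.finrank ℤ (BMHomology (Kset X T) i) ≤
      Nat.card (cellsD (critOf W (Kset X T)) (i + 1)) := by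
  classical
  set K := Kset X T with hK
  set d1 := simpBd K i with hd1
  set d2 := simpBd K (i+1) with hd2
  set N : Submodule ℤ (LinearMap.ker d1) :=
    Submodule.comap (LinearMap.ker d1).subtype (LinearMap.range d2) with hN
  -- the columns of d1 at matched cells
  set v : Pairs W i → (cellsD K i → ℤ) :=
    fun p => fun α => incSign α.1 p.1.2 with hv
  have hvmem : ∀ p : Pairs W i, v p ∈ LinearMap.range d1 := by
    intro p
    refine ⟨Pi.single (⟨p.1.2, (hW.1.1 p.1 p.2.1).2.1, p.2.2⟩ : cellsD K (i+1)) 1, ?_⟩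
    rw [hd1, simpBd, Matrix.mulVecLin_apply]
    funext α
    simp [Matrix.of_apply, Matrix.mulVec, dotProduct, Pi.single_apply]
    refine (Finset.sum_eq_single_of_mem (⟨p.1.2, (hW.1.1 p.1 p.2.1).2.1, p.2.2⟩ : cellsD K (i+1))
      (Finset.mem_univ _) fun (b : cellsD K (i+1)) _ hb => ?_).trans ?_
    · rw [mul_eq_zero]; right; exact @dif_neg _ (Classical.propDecidable _) hb _ _ _
    · exact (congrArg _ (Pi.single_eq_same _ 1)).trans (mul_one _)
  have h3 : (Fintype.card (Pairs W i) : Cardinal) ≤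
      Module.rank ℤ (LinearMap.range d1) := by
    have hind : LinearIndependent ℤ (fun p : Pairs W i => (⟨v p, hvmem p⟩ :
        LinearMap.range d1)) := by
      apply LinearIndependent.of_comp (LinearMap.range d1).subtype
      exact cols_indep K hW i
    rw [← Cardinal.mk_fintype]
    exact hind.cardinal_le_rank
  -- the columns of d2 at matched cells
  set w : Pairs W (i+1) → (cellsD K (i+1) → ℤ) :=
    fun p => fun β => incSign β.1 p.1.2 with hw
  have hwrange : ∀ p : Pairs W (i+1), w p ∈ LinearMap.range d2 := by
    intro p
    refine ⟨Pi.single (⟨p.1.2, (hW.1.1 p.1 p.2.1).2.1, p.2.2⟩ : cellsD K (i+2)) 1, ?_⟩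
    rw [hd2, simpBd, Matrix.mulVecLin_apply]
    funext β
    simp [Matrix.of_apply, Matrix.mulVec, dotProduct, Pi.single_apply]
    refine (Finset.sum_eq_single_of_mem (⟨p.1.2, (hW.1.1 p.1 p.2.1).2.1, p.2.2⟩ : cellsD K (i+2))
      (Finset.mem_univ _) fun (b : cellsD K (i+2)) _ hb => ?_).trans ?_
    · rw [mul_eq_zero]; right; exact @dif_neg _ (Classical.propDecidable _) hb _ _ _
    · exact (congrArg _ (Pi.single_eq_same _ 1)).trans (mul_one _)
  have hwker : ∀ p : Pairs W (i+1), w p ∈ LinearMap.ker d1 := by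
    intro p
    rw [LinearMap.mem_ker, hd1, simpBd, Matrix.mulVecLin_apply]
    funext ρ
    rw [Matrix.mulVec, dotProduct]
    simp only [Matrix.of_apply, Pi.zero_apply]
    exact bd_squared X T ρ.2.1 ((hW.1.1 p.1 p.2.1).2.1) ρ.2.2 p.2.2
  have h4 : (Fintype.card (Pairs W (i+1)) : Cardinal) ≤ Module.rank ℤ N := by
    have hind : LinearIndependent ℤ (fun p : Pairs W (i+1) =>
        (⟨⟨w p, hwker p⟩, hwrange p⟩ : N)) := by
      apply LinearIndependent.of_comp ((LinearMap.ker d1).subtype.comp N.subtype)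
      exact cols_indep K hW (i+1)
    rw [← Cardinal.mk_fintype]
    exact hind.cardinal_le_rank
  have e1 := Submodule.rank_quotient_add_rank N
  have e2 := LinearMap.rank_range_add_rank_ker d1
  have e3 : Module.rank ℤ (cellsD K (i+1) → ℤ) = Fintype.card (cellsD K (i+1)) :=
    rank_fun'
  have count := card_count K hW.1 i
  have hfin : ((Fintype.card (Pairs W (i+1)) : Cardinal) +
      (Fintype.card (Pairs W i) : Cardinal)) < Cardinal.aleph0 :=
    Cardinal.add_lt_aleph0 (Cardinal.nat_lt_aleph0 _) (Cardinal.nat_lt_aleph0 _)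
  have hmain : Module.rank ℤ (LinearMap.ker d1 ⧸ N) +
      ((Fintype.card (Pairs W (i+1)) : Cardinal) + (Fintype.card (Pairs W i) : Cardinal)) ≤
      (Nat.card (cellsD (critOf W K) (i + 1)) : Cardinal) +
      ((Fintype.card (Pairs W (i+1)) : Cardinal) + (Fintype.card (Pairs W i) : Cardinal)) := by
    calc Module.rank ℤ (LinearMap.ker d1 ⧸ N) +
        ((Fintype.card (Pairs W (i+1)) : Cardinal) + (Fintype.card (Pairs W i) : Cardinal))
        ≤ Module.rank ℤ (LinearMap.ker d1 ⧸ N) +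
          (Module.rank ℤ N + Module.rank ℤ (LinearMap.range d1)) :=
        add_le_add (le_refl _) (add_le_add h4 h3)
      _ = (Module.rank ℤ (LinearMap.ker d1 ⧸ N) + Module.rank ℤ N) +
          Module.rank ℤ (LinearMap.range d1) := by rw [add_assoc]
      _ = Module.rank ℤ (LinearMap.ker d1) + Module.rank ℤ (LinearMap.range d1) := by
          rw [e1]
      _ = Module.rank ℤ (cellsD K (i+1) → ℤ) := by rw [add_comm]; exact e2
      _ = (Fintype.card (cellsD K (i+1)) : Cardinal) := e3
      _ = (Nat.card (cellsD (critOf W K) (i + 1)) : Cardinal) +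
          ((Fintype.card (Pairs W (i+1)) : Cardinal) +
            (Fintype.card (Pairs W i) : Cardinal)) := by
          rw [count]; push_cast; ring
  have hrank : Module.rank ℤ (LinearMap.ker d1 ⧸ N) ≤
      (Nat.card (cellsD (critOf W K) (i + 1)) : Cardinal) :=
    (Cardinal.add_le_add_iff_of_lt_aleph0 hfin).1 hmain
  exact Module.finrank_le_of_rank_le hrank

end MorseAux

/-- Weak Morse inequalities for open simplicial complexes: the rank of the
Borel–Moore homology `H_i^{BM}(K) = H_i(X, T)` is at most the number of critical
`i`-cells of a discrete gradient on `K = X \ T`. -/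
theorem stmt_11 {V : Type u} [DecidableEq V] [LinearOrder V] [Fintype V]
    (X T : SComplex V) (hT : T.faces ⊆ X.faces)
    (W : Set (Finset V × Finset V)) (hW : IsGradientOn (Kset X T) W) (i : ℕ) :
    Module.finrank ℤ (BMHomology (Kset X T) i) ≤
      Nat.card (cellsD (critOf W (Kset X T)) (i + 1)) := by
  exact stmt_11' X T hT W hW i
end

section
/- Let f be a discrete Morse function on a finite simplicial complex X and for a ∈ ℝ let X_a be the level subcomplex generated by all simplices with f-value at most a. If the interval [a, b] contains no critical value of f, then X_b simplicially collapses onto X_a. -/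
open Finset
open scoped Classical

universe u

variable {V : Type u} [DecidableEq V]

section CollapseProof

variable {X : SComplex V} {f : Finset V → ℝ}

/-- The minimum of `f` over the faces of `X` containing `ρ`. -/
noncomputable def gval (X : SComplex V) (f : Finset V → ℝ) (ρ : Finset V) : ℝ :=
  if h : (X.faces.filter fun σ => ρ ⊆ σ).Nonempty
  then (X.faces.filter fun σ => ρ ⊆ σ).inf' h f else 0

lemma gval_filter_nonempty {ρ : Finset V} (hρ : ρ ∈ X.faces) :
    (X.faces.filter fun σ => ρ ⊆ σ).Nonempty :=
  ⟨ρ, Finset.mem_filter.mpr ⟨hρ, subset_rfl⟩⟩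

lemma gval_le {ρ σ : Finset V} (hρ : ρ ∈ X.faces) (hσ : σ ∈ X.faces) (h : ρ ⊆ σ) :
    gval X f ρ ≤ f σ := by
  rw [gval, dif_pos (gval_filter_nonempty hρ)]
  exact Finset.inf'_le f (Finset.mem_filter.mpr ⟨hσ, h⟩)

lemma gval_le_self {ρ : Finset V} (hρ : ρ ∈ X.faces) : gval X f ρ ≤ f ρ :=
  gval_le hρ hρ subset_rfl

lemma gval_exists {ρ : Finset V} (hρ : ρ ∈ X.faces) :
    ∃ σ ∈ X.faces, ρ ⊆ σ ∧ f σ = gval X f ρ := by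
  rw [gval, dif_pos (gval_filter_nonempty hρ)]
  obtain ⟨σ, hσ, hval⟩ := Finset.exists_mem_eq_inf' (gval_filter_nonempty hρ) f
  rw [Finset.mem_filter] at hσ
  exact ⟨σ, hσ.1, hσ.2, hval.symm⟩

lemma gval_mono {ρ σ : Finset V} (hρ : ρ ∈ X.faces) (hσ : σ ∈ X.faces) (h : ρ ⊆ σ) :
    gval X f ρ ≤ gval X f σ := by
  obtain ⟨σ', hσ'S, hsub, hval⟩ := gval_exists (f := f) hσ
  calc gval X f ρ ≤ f σ' := gval_le hρ hσ'S (h.trans hsub)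
    _ = gval X f σ := hval

/-- The gradient matching relation of `f`. -/
def Mrel (X : SComplex V) (f : Finset V → ℝ) (α β : Finset V) : Prop :=
  α ∈ X.faces ∧ β ∈ X.faces ∧ Face1 α β ∧ f β ≤ f α

lemma Mrel.ssubset {α β : Finset V} (h : Mrel X f α β) : α ⊂ β := by
  refine Finset.ssubset_iff_subset_ne.mpr ⟨h.2.2.1.1, ?_⟩
  intro he
  have := h.2.2.1.2
  rw [he] at this
  omega

lemma M_right_unique (hf : IsDMFOn (↑X.faces : Set (Finset V)) f) {α β β' : Finset V}
    (h1 : Mrel X f α β) (h2 : Mrel X f α β') : β = β' :=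
  (hf α (Finset.mem_coe.mpr h1.1)).1
    ⟨Finset.mem_coe.mpr h1.2.1, h1.2.2.1, h1.2.2.2⟩
    ⟨Finset.mem_coe.mpr h2.2.1, h2.2.2.1, h2.2.2.2⟩

lemma M_left_unique (hf : IsDMFOn (↑X.faces : Set (Finset V)) f) {α α' β : Finset V}
    (h1 : Mrel X f α β) (h2 : Mrel X f α' β) : α = α' :=
  (hf β (Finset.mem_coe.mpr h1.2.1)).2
    ⟨Finset.mem_coe.mpr h1.1, h1.2.2.1, h1.2.2.2⟩
    ⟨Finset.mem_coe.mpr h2.1, h2.2.2.1, h2.2.2.2⟩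

/-- Forman's exclusivity lemma: no cell is both the top of a pair and the bottom of a pair. -/
lemma M_no_chain (hf : IsDMFOn (↑X.faces : Set (Finset V)) f) {α β γ : Finset V}
    (h1 : Mrel X f α β) (h2 : Mrel X f β γ) : False := by
  obtain ⟨hαS, hβS, ⟨hαβ, hcαβ⟩, hfβα⟩ := h1
  obtain ⟨-, hγS, ⟨hβγ, hcβγ⟩, hfγβ⟩ := h2
  -- pick y ∈ γ \ β, form β' = insert y α
  have hαγ : α ⊆ γ := hαβ.trans hβγ
  have hyne : (γ \ β).Nonempty := by
    rw [Finset.sdiff_nonempty]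
    intro h
    have := Finset.card_le_card h
    omega
  obtain ⟨y, hy⟩ := hyne
  rw [Finset.mem_sdiff] at hy
  have hyα : y ∉ α := fun h => hy.2 (hαβ h)
  set β' := insert y α with hβ'
  have hβ'γ : β' ⊆ γ := Finset.insert_subset hy.1 hαγ
  have hβ'S : β' ∈ X.faces := X.down_closed γ hγS β' hβ'γ (Finset.insert_nonempty _ _)
  have hcβ' : β'.card = α.card + 1 := Finset.card_insert_of_notMem hyα
  have hβ'ne : β' ≠ β := by
    intro h
    exact hy.2 (h ▸ Finset.mem_insert_self y α)
  have hF1 : Face1 α β' := ⟨Finset.subset_insert _ _, hcβ'.symm⟩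
  have hF2 : Face1 β' γ := ⟨hβ'γ, by omega⟩
  have h1' : ¬ f β' ≤ f α := by
    intro h
    exact hβ'ne ((hf α (Finset.mem_coe.mpr hαS)).1
      ⟨Finset.mem_coe.mpr hβ'S, hF1, h⟩
      ⟨Finset.mem_coe.mpr hβS, ⟨hαβ, hcαβ⟩, hfβα⟩)
  have h2' : ¬ f γ ≤ f β' := by
    intro h
    exact hβ'ne ((hf γ (Finset.mem_coe.mpr hγS)).2
      ⟨Finset.mem_coe.mpr hβ'S, hF2, h⟩
      ⟨Finset.mem_coe.mpr hβS, ⟨hβγ, hcβγ⟩, hfγβ⟩)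
  push_neg at h1' h2'
  linarith

/-- Any minimizer of `f` over the cofaces of `ρ` is `ρ` itself or a codimension-1 coface. -/
lemma exists_min_coface (hf : IsDMFOn (↑X.faces : Set (Finset V)) f) {ρ : Finset V}
    (hρ : ρ ∈ X.faces) :
    ∃ σ ∈ X.faces, ρ ⊆ σ ∧ f σ = gval X f ρ ∧ (σ = ρ ∨ Face1 ρ σ) := by
  obtain ⟨σ, hσS, hsub, hval⟩ := gval_exists (f := f) hρ
  refine ⟨σ, hσS, hsub, hval, ?_⟩
  by_contra hcon
  push_neg at hcon
  obtain ⟨hne, hnF⟩ := hcon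
  have hρne : ρ.Nonempty := X.nonempty_of_mem ρ hρ
  have hlt : ρ.card < σ.card := Finset.card_lt_card (Finset.ssubset_iff_subset_ne.mpr ⟨hsub, Ne.symm hne⟩)
  have hcard : ρ.card + 2 ≤ σ.card := by
    rcases Nat.lt_or_ge σ.card (ρ.card + 2) with h | h
    · exact absurd ⟨hsub, by omega⟩ hnF
    · exact h
  have h2 : 1 < (σ \ ρ).card := by
    rw [Finset.card_sdiff_of_subset hsub]; omega
  obtain ⟨x, hx, y, hy, hxy⟩ := Finset.one_lt_card.mp h2
  rw [Finset.mem_sdiff] at hx hy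
  have key : ∀ z ∈ σ \ ρ, (σ.erase z) ∈ {ν | ν ∈ (↑X.faces : Set (Finset V)) ∧ Face1 ν σ ∧ f σ ≤ f ν} := by
    intro z hz
    rw [Finset.mem_sdiff] at hz
    have hρsub : ρ ⊆ σ.erase z := fun w hw =>
      Finset.mem_erase.mpr ⟨fun he => hz.2 (he ▸ hw), hsub hw⟩
    have hzS : σ.erase z ∈ X.faces :=
      X.down_closed σ hσS _ (Finset.erase_subset _ _) (hρne.mono hρsub)
    have hcz : (σ.erase z).card + 1 = σ.card := by
      rw [Finset.card_erase_of_mem hz.1]; omega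
    refine ⟨Finset.mem_coe.mpr hzS, ⟨Finset.erase_subset _ _, hcz⟩, ?_⟩
    rw [hval]
    exact gval_le hρ hzS hρsub
  have heq : σ.erase x = σ.erase y :=
    (hf σ (Finset.mem_coe.mpr hσS)).2 (key x (Finset.mem_sdiff.mpr hx))
      (key y (Finset.mem_sdiff.mpr hy))
  have : x ∈ σ.erase y := Finset.mem_erase.mpr ⟨hxy, hx.1⟩
  rw [← heq] at this
  exact (Finset.mem_erase.mp this).1.elim rfl

/-- Matched cells have the same `gval`. -/
lemma gval_M (hf : IsDMFOn (↑X.faces : Set (Finset V)) f) {ρ τ : Finset V}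
    (h : Mrel X f ρ τ) : gval X f ρ = gval X f τ := by
  refine le_antisymm (gval_mono h.1 h.2.1 h.2.2.1.1) ?_
  obtain ⟨σ, hσS, hsub, hval, hor⟩ := exists_min_coface hf h.1
  rcases hor with rfl | hface
  · calc gval X f τ ≤ f τ := gval_le_self h.2.1
      _ ≤ f σ := h.2.2.2
      _ = gval X f σ := hval
  · have hMσ : Mrel X f ρ σ := ⟨h.1, hσS, hface, by
      rw [hval]; exact gval_le_self h.1⟩
    have hστ : σ = τ := M_right_unique hf hMσ h
    calc gval X f τ ≤ f τ := gval_le_self h.2.1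
      _ = gval X f ρ := by rw [← hστ]; exact hval

/-- Every cell with `gval` in `(a, b]` is matched. -/
lemma exists_partner (hf : IsDMFOn (↑X.faces : Set (Finset V)) f) {a b : ℝ}
    (hreg : ∀ σ, IsCriticalIn (↑X.faces : Set (Finset V)) f σ → f σ ∉ Set.Icc a b)
    {ρ : Finset V} (hρ : ρ ∈ X.faces) (ha : a < gval X f ρ) (hb : gval X f ρ ≤ b) :
    ∃ π, Mrel X f ρ π ∨ Mrel X f π ρ := by
  obtain ⟨σ, hσS, hsub, hval, hor⟩ := exists_min_coface hf hρ
  rcases hor with rfl | hface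
  · -- f ρ = gval ρ ∈ (a, b]
    by_contra hcon
    push_neg at hcon
    refine hreg σ ⟨Finset.mem_coe.mpr hσS, ?_, ?_⟩ ⟨by linarith [hval.le], by linarith [hval.ge]⟩
    · rintro ⟨β, hβS, hF, hle⟩
      exact (hcon β).1 ⟨hσS, Finset.mem_coe.mp hβS, hF, hle⟩
    · rintro ⟨ν, hνS, hF, hle⟩
      exact (hcon ν).2 ⟨Finset.mem_coe.mp hνS, hσS, hF, hle⟩
  · exact ⟨σ, Or.inl ⟨hρ, hσS, hface, by rw [hval]; exact gval_le_self hρ⟩⟩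

/-- Main induction: any intermediate matched-closed down-closed family collapses
onto the `a`-sublevel. -/
lemma collapse_main (hf : IsDMFOn (↑X.faces : Set (Finset V)) f) {a b : ℝ} :
    ∀ n (Y : Finset (Finset V)), Y.card ≤ n →
      (X.faces.filter fun ρ => gval X f ρ ≤ a) ⊆ Y →
      Y ⊆ X.faces.filter (fun ρ => gval X f ρ ≤ b) →
      (∀ ρ ∈ Y, ∀ ν, ν ⊆ ρ → ν.Nonempty → ν ∈ Y) →
      (∀ ρ ∈ Y, a < gval X f ρ → ∃ π ∈ Y, Mrel X f ρ π ∨ Mrel X f π ρ) →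
      Relation.ReflTransGen ElemCollapse (↑Y : Set (Finset V))
        ↑(X.faces.filter fun ρ => gval X f ρ ≤ a) := by
  intro n
  induction n with
  | zero =>
    intro Y hcard h1 _ _ _
    have hY : Y = ∅ := Finset.card_eq_zero.mp (Nat.le_antisymm hcard (Nat.zero_le _))
    subst hY
    rw [Finset.subset_empty.mp h1]
  | succ n ih =>
    intro Y hcard h1 h2 hdc hM
    have hfaces : ∀ γ ∈ Y, γ ∈ X.faces := fun γ h => (Finset.mem_filter.mp (h2 h)).1
    by_cases hYa : Y ⊆ X.faces.filter fun ρ => gval X f ρ ≤ a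
    · rw [Finset.Subset.antisymm hYa h1]
    · obtain ⟨ρ₀, hρ₀Y, hρ₀a⟩ := Finset.not_subset.mp hYa
      have hgt : ∀ γ ∈ Y, γ ∉ (X.faces.filter fun ρ => gval X f ρ ≤ a) → a < gval X f γ := by
        intro γ hγ hn
        by_contra h
        push_neg at h
        exact hn (Finset.mem_filter.mpr ⟨hfaces γ hγ, h⟩)
      have hρ₀gt : a < gval X f ρ₀ := hgt ρ₀ hρ₀Y hρ₀a
      -- P : lower cells of pairs inside Y above level a
      set P := Y.filter (fun ρ => a < gval X f ρ ∧ ∃ τ ∈ Y, Mrel X f ρ τ) with hP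
      have hPne : P.Nonempty := by
        obtain ⟨π, hπY, hπM⟩ := hM ρ₀ hρ₀Y hρ₀gt
        rcases hπM with h | h
        · exact ⟨ρ₀, Finset.mem_filter.mpr ⟨hρ₀Y, hρ₀gt, π, hπY, h⟩⟩
        · refine ⟨π, Finset.mem_filter.mpr ⟨hπY, ?_, ρ₀, hρ₀Y, h⟩⟩
          rw [gval_M hf h]; exact hρ₀gt
      obtain ⟨ρ, hρP, hmax⟩ := Finset.exists_max_image P f hPne
      rw [hP, Finset.mem_filter] at hρP
      obtain ⟨hρY, hρgt, τ, hτY, hMρτ⟩ := hρP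
      have hρS : ρ ∈ X.faces := hfaces ρ hρY
      have hτgt : a < gval X f τ := by rw [← gval_M hf hMρτ]; exact hρgt
      -- freeness in codimension 1
      have hfree1 : ∀ β ∈ Y, Face1 ρ β → β = τ := by
        intro β hβY hF
        by_contra hne
        have hβS : β ∈ X.faces := hfaces β hβY
        have hflt : f ρ < f β := by
          by_contra h
          push_neg at h
          exact hne (M_right_unique hf ⟨hρS, hβS, hF, h⟩ hMρτ)
        have hβgt : a < gval X f β := lt_of_lt_of_le hρgt (gval_mono hρS hβS hF.1)
        obtain ⟨π, hπY, hπM⟩ := hM β hβY hβgt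
        rcases hπM with h | h
        · have hβP : β ∈ P := Finset.mem_filter.mpr ⟨hβY, hβgt, π, hπY, h⟩
          exact absurd (hmax β hβP) (not_le.mpr hflt)
        · have hπgt : a < gval X f π := by rw [gval_M hf h]; exact hβgt
          have hπP : π ∈ P := Finset.mem_filter.mpr ⟨hπY, hπgt, β, hβY, h⟩
          have h1' := hmax π hπP
          have h2' : f β ≤ f π := h.2.2.2
          linarith
      -- freeness in general
      have hfree : ∀ β ∈ Y, ρ ⊂ β → β = τ := by
        intro β hβY hss
        have hd : (β \ ρ).Nonempty := Finset.sdiff_nonempty.mpr (fun h => hss.2 h)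
        have hall : ∀ x ∈ β \ ρ, insert x ρ = τ := by
          intro x hx
          rw [Finset.mem_sdiff] at hx
          have hsub : insert x ρ ⊆ β := Finset.insert_subset hx.1 hss.subset
          have hmem : insert x ρ ∈ Y := hdc β hβY _ hsub (Finset.insert_nonempty _ _)
          exact hfree1 _ hmem ⟨Finset.subset_insert _ _,
            by rw [Finset.card_insert_of_notMem hx.2]⟩
        obtain ⟨x, hx⟩ := hd
        have hsingle : β \ ρ = {x} := by
          refine Finset.eq_singleton_iff_unique_mem.mpr ⟨hx, fun y hy => ?_⟩
          have h1' := hall y hy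
          have h2' := hall x hx
          have : y ∈ insert x ρ := by
            rw [h2', ← h1']; exact Finset.mem_insert_self y ρ
          rcases Finset.mem_insert.mp this with h | h
          · exact h
          · exact absurd h (Finset.mem_sdiff.mp hy).2
        have hβeq : β = insert x ρ := by
          have hu := Finset.union_sdiff_of_subset hss.subset
          rw [hsingle] at hu
          rw [← hu, Finset.union_comm, ← Finset.insert_eq]
        rw [hβeq, hall x hx]
      have hρτne : ρ ≠ τ := (Mrel.ssubset hMρτ).ne
      -- the collapse step
      set Y' := Y \ {ρ, τ} with hY'
      have hρτsub : ({ρ, τ} : Finset (Finset V)) ⊆ Y := by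
        rw [Finset.insert_subset_iff, Finset.singleton_subset_iff]
        exact ⟨hρY, hτY⟩
      have hstep : ElemCollapse (↑Y : Set (Finset V)) (↑Y' : Set (Finset V)) := by
        refine ⟨ρ, τ, Finset.mem_coe.mpr hρY, Finset.mem_coe.mpr hτY, hMρτ.2.2.1, ?_, ?_⟩
        · intro γ hγ hss
          exact hfree γ (Finset.mem_coe.mp hγ) hss
        · rw [hY', Finset.coe_sdiff, Finset.coe_insert, Finset.coe_singleton]
      -- invariants for Y'
      have hcard' : Y'.card ≤ n := by
        have hss : Y' ⊂ Y := Finset.sdiff_ssubset hρτsub ⟨ρ, Finset.mem_insert_self _ _⟩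
        have := Finset.card_lt_card hss
        omega
      have h1' : (X.faces.filter fun ρ => gval X f ρ ≤ a) ⊆ Y' := by
        intro γ hγ
        rw [hY', Finset.mem_sdiff]
        refine ⟨h1 hγ, ?_⟩
        have hγa : gval X f γ ≤ a := (Finset.mem_filter.mp hγ).2
        intro hmem
        rcases Finset.mem_insert.mp hmem with h | h
        · subst h; linarith
        · rw [Finset.mem_singleton] at h; subst h; linarith
      have h2' : Y' ⊆ X.faces.filter (fun ρ => gval X f ρ ≤ b) :=
        (Finset.sdiff_subset).trans h2
      have hρss : ρ ⊂ τ := Mrel.ssubset hMρτ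
      have hdc' : ∀ γ ∈ Y', ∀ ν, ν ⊆ γ → ν.Nonempty → ν ∈ Y' := by
        intro γ hγ ν hνsub hνne
        rw [hY', Finset.mem_sdiff] at hγ ⊢
        obtain ⟨hγY, hγnot⟩ := hγ
        refine ⟨hdc γ hγY ν hνsub hνne, ?_⟩
        intro hmem
        rcases Finset.mem_insert.mp hmem with h | h
        · -- ν = ρ
          subst h
          have hγρ : ν ⊂ γ := by
            refine Finset.ssubset_iff_subset_ne.mpr ⟨hνsub, ?_⟩
            intro he
            exact hγnot (he ▸ Finset.mem_insert_self _ _)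
          have := hfree γ hγY hγρ
          exact hγnot (by rw [this]; exact Finset.mem_insert_of_mem (Finset.mem_singleton_self _))
        · -- ν = τ
          rw [Finset.mem_singleton] at h
          subst h
          have hγρ : ρ ⊂ γ := hρss.trans_subset hνsub
          have := hfree γ hγY hγρ
          exact hγnot (by rw [this]; exact Finset.mem_insert_of_mem (Finset.mem_singleton_self _))
      have hM' : ∀ γ ∈ Y', a < gval X f γ → ∃ π ∈ Y', Mrel X f γ π ∨ Mrel X f π γ := by
        intro γ hγ hγgt
        rw [hY', Finset.mem_sdiff] at hγ
        obtain ⟨hγY, hγnot⟩ := hγ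
        obtain ⟨π, hπY, hπM⟩ := hM γ hγY hγgt
        refine ⟨π, ?_, hπM⟩
        rw [hY', Finset.mem_sdiff]
        refine ⟨hπY, ?_⟩
        intro hmem
        rcases Finset.mem_insert.mp hmem with h | h
        · -- π = ρ
          subst h
          rcases hπM with h' | h'
          · exact M_no_chain hf h' hMρτ
          · refine hγnot ?_
            rw [M_right_unique hf h' hMρτ]
            exact Finset.mem_insert_of_mem (Finset.mem_singleton_self _)
        · -- π = τ
          rw [Finset.mem_singleton] at h
          subst h
          rcases hπM with h' | h'
          · exact hγnot (by rw [M_left_unique hf h' hMρτ]; exact Finset.mem_insert_self _ _)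
          · exact M_no_chain hf hMρτ h'
      exact Relation.ReflTransGen.head hstep (ih Y' hcard' h1' h2' hdc' hM')

lemma sublevel_eq (X : SComplex V) (f : Finset V → ℝ) (c : ℝ) :
    sublevel (↑X.faces : Set (Finset V)) f c
      = ↑(X.faces.filter fun ρ => gval X f ρ ≤ c) := by
  ext ρ
  simp only [sublevel, Set.mem_setOf_eq, Finset.coe_filter, Finset.mem_coe]
  constructor
  · rintro ⟨hne, σ, hσS, hσc, hsub⟩
    have hσS' : σ ∈ X.faces := Finset.mem_coe.mp hσS
    have hρS : ρ ∈ X.faces := X.down_closed σ hσS' ρ hsub hne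
    exact ⟨hρS, le_trans (gval_le hρS hσS' hsub) hσc⟩
  · rintro ⟨hρS, hc⟩
    obtain ⟨σ, hσS, hsub, hval⟩ := gval_exists (f := f) hρS
    exact ⟨X.nonempty_of_mem ρ hρS, σ, Finset.mem_coe.mpr hσS, hval ▸ hc, hsub⟩

end CollapseProof

/-- If the interval `[a, b]` contains no critical value of a discrete Morse
function `f` on a finite simplicial complex `X`, then the level subcomplex `X_b`
simplicially collapses onto `X_a`. -/
theorem stmt_13 {V : Type u} [DecidableEq V] (X : SComplex V) (f : Finset V → ℝ)
    (hf : IsDMFOn (↑X.faces : Set (Finset V)) f) (a b : ℝ) (hab : a ≤ b)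
    (hreg : ∀ σ, IsCriticalIn (↑X.faces : Set (Finset V)) f σ → f σ ∉ Set.Icc a b) :
    Relation.ReflTransGen ElemCollapse
      (sublevel (↑X.faces : Set (Finset V)) f b)
      (sublevel (↑X.faces : Set (Finset V)) f a) := by
  rw [sublevel_eq X f b, sublevel_eq X f a]
  refine collapse_main hf (a := a) (b := b)
    (X.faces.filter fun ρ => gval X f ρ ≤ b).card _ le_rfl ?_ subset_rfl ?_ ?_
  · intro ρ hρ
    rw [Finset.mem_filter] at hρ ⊢
    exact ⟨hρ.1, le_trans hρ.2 hab⟩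
  · intro ρ hρ ν hsub hne
    rw [Finset.mem_filter] at hρ ⊢
    have hνS : ν ∈ X.faces := X.down_closed ρ hρ.1 ν hsub hne
    exact ⟨hνS, le_trans (gval_mono hνS hρ.1 hsub) hρ.2⟩
  · intro ρ hρ hgt
    rw [Finset.mem_filter] at hρ
    obtain ⟨π, hπM⟩ := exists_partner hf hreg hρ.1 hgt hρ.2
    refine ⟨π, Finset.mem_filter.mpr ⟨?_, ?_⟩, hπM⟩
    · rcases hπM with h | h
      · exact h.2.1
      · exact h.1
    · rcases hπM with h | h
      · rw [← gval_M hf h]; exact hρ.2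
      · rw [gval_M hf h]; exact hρ.2
end
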